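/- arXiv:0810.1572 — 6 statements merged into one kernel-verified Lean document; each statement's English description precedes it below -/
import Mathlib

section
/- For real numbers x₁,…,xₙ with n ≥ 2, letting R = max xᵢ - min xᵢ be the range and Q = ∑ᵢ (xᵢ - x̄)², one has R²/2 ≤ Q ≤ nR²/4. -/
open Finset

theorem range_bounds_sample_variance (n : ℕ) (hn : 2 ≤ n) (x : Fin n → ℝ)
    (hne : (Finset.univ : Finset (Fin n)).Nonempty)
    (R Q : ℝ)
    (hR : R = Finset.univ.sup' hne x - Finset.univ.inf' hne x)
    (hQ : Q = ∑ i, (x i - (∑ j, x j) / n)^2) :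
    R^2 / 2 ≤ Q ∧ Q ≤ n * R^2 / 4 := by
  have hnpos : (0:ℝ) < n := by positivity
  set M := Finset.univ.sup' hne x with hM
  set m := Finset.univ.inf' hne x with hm
  set S := ∑ j, x j with hS
  set μ := S / n with hμ
  obtain ⟨a, -, hA⟩ := Finset.exists_mem_eq_sup' hne x
  obtain ⟨b, -, hB⟩ := Finset.exists_mem_eq_inf' hne x
  have hle : ∀ i, m ≤ x i ∧ x i ≤ M := fun i =>
    ⟨Finset.inf'_le x (Finset.mem_univ i), Finset.le_sup' x (Finset.mem_univ i)⟩
  have hSμ : S = n * μ := by rw [hμ]; field_simp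
  -- upper bound
  have key : Q + ∑ i, (x i - m) * (M - x i) = n * ((M - μ) * (μ - m)) := by
    have e1 : ∀ i ∈ Finset.univ,
        (x i - μ)^2 + (x i - m) * (M - x i)
          = (M + m - 2*μ) * x i + (μ^2 - m*M) := fun i _ => by ring
    calc Q + ∑ i, (x i - m) * (M - x i)
        = ∑ i, ((x i - μ)^2 + (x i - m) * (M - x i)) := by
          rw [hQ, Finset.sum_add_distrib]
      _ = ∑ i, ((M + m - 2*μ) * x i + (μ^2 - m*M)) := Finset.sum_congr rfl e1
      _ = (M + m - 2*μ) * S + n * (μ^2 - m*M) := by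
          rw [Finset.sum_add_distrib, ← Finset.mul_sum, Finset.sum_const,
            Finset.card_univ, Fintype.card_fin, nsmul_eq_mul, ← hS]
      _ = n * ((M - μ) * (μ - m)) := by rw [hSμ]; ring
  have hnn : 0 ≤ ∑ i, (x i - m) * (M - x i) :=
    Finset.sum_nonneg fun i _ => mul_nonneg (by linarith [(hle i).1]) (by linarith [(hle i).2])
  have hμM : μ ≤ M := by
    have : S ≤ n * M := by
      rw [hS]
      calc ∑ j, x j ≤ ∑ _j : Fin n, M := Finset.sum_le_sum fun i _ => (hle i).2
        _ = n * M := by simp [mul_comm]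
    rw [hμ]; rw [div_le_iff₀ hnpos]; linarith
  have hmμ : m ≤ μ := by
    have : n * m ≤ S := by
      rw [hS]
      calc (n:ℝ) * m = ∑ _j : Fin n, m := by simp [mul_comm]
        _ ≤ ∑ j, x j := Finset.sum_le_sum fun i _ => (hle i).1
    rw [hμ]; rw [le_div_iff₀ hnpos]; linarith
  have hub : Q ≤ n * R^2 / 4 := by
    have h1 : Q ≤ n * ((M - μ) * (μ - m)) := by linarith
    have h2 : (M - μ) * (μ - m) ≤ (M - m)^2 / 4 := by nlinarith [sq_nonneg (M - μ - (μ - m))]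
    have : n * ((M - μ) * (μ - m)) ≤ n * ((M - m)^2 / 4) :=
      mul_le_mul_of_nonneg_left h2 (le_of_lt hnpos)
    rw [hR]; linarith
  refine ⟨?_, hub⟩
  -- lower bound
  by_cases hab : a = b
  · have hR0 : R = 0 := by rw [hR, hM, hm, hA, hB, hab]; ring
    have hQ0 : 0 ≤ Q := by rw [hQ]; positivity
    rw [hR0]; norm_num; linarith
  · have hsub : ({a, b} : Finset (Fin n)) ⊆ Finset.univ := Finset.subset_univ _
    have h2 : ∑ i ∈ ({a, b} : Finset (Fin n)), (x i - μ)^2 ≤ Q := by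
      rw [hQ]
      exact Finset.sum_le_sum_of_subset_of_nonneg hsub fun i _ _ => sq_nonneg _
    rw [Finset.sum_pair hab] at h2
    have hRab : R = x a - x b := by rw [hR, hM, hm, hA, hB]
    nlinarith [sq_nonneg (x a - μ + (x b - μ)), h2]
end

section
/- Let 0 < p < 1, t > 0, y > 0 and define ψ⁺_p(t,y) = ∫₀¹ exp(-(y + x√(-it))²) p x^{p-1} dx. Then |ψ⁺_p(t,y)| ≤ 2^{-p/2} Γ(p+1) t^{-p/2} y^{-p} exp(-y²). -/
open MeasureTheory Complex Real

theorem psi_plus_bound (p t y : ℝ) (hp : 0 < p) (hp1 : p < 1) (ht : 0 < t) (hy : 0 < y) :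
    ‖(∫ x in Set.Ioc (0:ℝ) 1,
        Complex.exp (-((y:ℂ) + (x:ℂ) * (Real.sqrt (t/2) * (1 - I)))^2) *
          (p * (x:ℂ) ^ ((p:ℂ) - 1)))‖ ≤
      (2:ℝ) ^ (-p/2) * Real.Gamma (p + 1) * t ^ (-p/2) * y ^ (-p) * Real.exp (-y^2) := by
  set s : ℝ := Real.sqrt (t/2) with hs_def
  have hs : 0 < s := Real.sqrt_pos.2 (by positivity)
  set a : ℝ := 2 * s * y with ha_def
  have ha : 0 < a := by positivity
  have key : ∀ x ∈ Set.Ioc (0:ℝ) 1,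
      ‖Complex.exp (-((y:ℂ) + (x:ℂ) * (s * (1 - I)))^2) * (↑p * (x:ℂ) ^ ((p:ℂ) - 1))‖
        = Real.exp (-y^2) * (p * (x ^ (p-1) * Real.exp (-(a * x)))) := by
    intro x hx
    have hre : (-(((y:ℂ) + x * (s * (1 - I)))^2)).re = -(y^2 + 2*s*x*y) := by
      simp [Complex.mul_re, Complex.mul_im, pow_two]
      ring
    rw [norm_mul, norm_mul,
      Complex.norm_exp, hre, Complex.norm_real, Real.norm_eq_abs,
      Complex.norm_cpow_eq_rpow_re_of_pos hx.1]
    simp only [Complex.sub_re, Complex.ofReal_re, Complex.one_re]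
    rw [abs_of_pos hp, show -(y^2 + 2*s*x*y) = -y^2 + -(a*x) by rw [ha_def]; ring,
      Real.exp_add]
    ring
  have hint : IntegrableOn (fun x : ℝ => x ^ (p-1) * Real.exp (-(a * x))) (Set.Ioi 0) := by
    have := integrableOn_rpow_mul_exp_neg_mul_rpow (p := 1) (s := p - 1) (b := a)
      (by linarith) zero_lt_one ha
    refine this.congr_fun (fun x hx => ?_) measurableSet_Ioi
    dsimp only; rw [Real.rpow_one, neg_mul]
  have hint2 : IntegrableOn
      (fun x : ℝ => Real.exp (-y^2) * (p * (x ^ (p-1) * Real.exp (-(a * x))))) (Set.Ioi 0) :=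
    (hint.const_mul p).const_mul _
  calc ‖(∫ x in Set.Ioc (0:ℝ) 1,
        Complex.exp (-((y:ℂ) + (x:ℂ) * (s * (1 - I)))^2) * (↑p * (x:ℂ) ^ ((p:ℂ) - 1)))‖
      ≤ ∫ x in Set.Ioc (0:ℝ) 1,
          ‖Complex.exp (-((y:ℂ) + (x:ℂ) * (s * (1 - I)))^2) * (↑p * (x:ℂ) ^ ((p:ℂ) - 1))‖ :=
        by exact norm_integral_le_integral_norm _
    _ = ∫ x in Set.Ioc (0:ℝ) 1,
          Real.exp (-y^2) * (p * (x ^ (p-1) * Real.exp (-(a * x)))) :=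
        setIntegral_congr_fun measurableSet_Ioc key
    _ ≤ ∫ x in Set.Ioi (0:ℝ),
          Real.exp (-y^2) * (p * (x ^ (p-1) * Real.exp (-(a * x)))) := by
        refine setIntegral_mono_set hint2 ?_ ?_
        · filter_upwards [self_mem_ae_restrict measurableSet_Ioi] with x hx
          have hx' : (0:ℝ) < x := hx
          positivity
        · exact Filter.Eventually.of_forall (fun x hx => hx.1)
    _ = Real.exp (-y^2) * (p * ((1/a) ^ p * Real.Gamma p)) := by
        rw [integral_const_mul, integral_const_mul, Real.integral_rpow_mul_exp_neg_mul_Ioi hp ha]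
    _ = (2:ℝ) ^ (-p/2) * Real.Gamma (p + 1) * t ^ (-p/2) * y ^ (-p) * Real.exp (-y^2) := by
        have h2t : a = y * Real.sqrt (2*t) := by
          rw [ha_def, hs_def, show (2:ℝ)*t = 2^2*(t/2) by ring,
            Real.sqrt_mul (by positivity), Real.sqrt_sq (by norm_num)]
          ring
        rw [Real.Gamma_add_one hp.ne', h2t, one_div, Real.inv_rpow (by positivity),
          ← Real.rpow_neg (by positivity), Real.mul_rpow hy.le (Real.sqrt_nonneg _),
          Real.sqrt_eq_rpow, ← Real.rpow_mul (by positivity : (0:ℝ) ≤ 2*t),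
          show (1/2) * (-p) = -p/2 by ring, Real.mul_rpow (by norm_num) ht.le]
        ring
end

section
/- Let 0 < p < 1, n ≥ 2, and define h⁻_p(y) = p ∫₀^∞ exp(-(x-y)²) x^{p-1} dx for y > 0. Then lim_{y→∞} y^{1-p} h⁻_p(y) = p√π, and consequently ∫₀^∞ (h⁻_p(y))ⁿ dy < ∞ whenever np < n-1. -/
open MeasureTheory Real Filter Set

lemma gauss_shift (y : ℝ) : Integrable (fun x : ℝ => Real.exp (-(x - y)^2)) := by
  have := (integrable_exp_neg_mul_sq (one_pos)).comp_sub_right y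
  simpa using this

lemma aux_cont (p y : ℝ) : ContinuousOn (fun x => Real.exp (-(x - y)^2) * x ^ (p - 1)) (Set.Ioi (0:ℝ)) := by
  apply ContinuousOn.mul
  · exact (Continuous.continuousOn (by continuity))
  · exact ContinuousOn.rpow_const continuousOn_id (fun x hx => Or.inl (ne_of_gt hx))

lemma aux_int (p : ℝ) (hp : 0 < p) (hp1 : p < 1) (y : ℝ) :
    IntegrableOn (fun x => Real.exp (-(x - y)^2) * x ^ (p - 1)) (Set.Ioi (0:ℝ)) := by
  have h1 : IntegrableOn (fun x => Real.exp (-(x - y)^2) * x ^ (p - 1)) (Set.Ioc (0:ℝ) 1) := by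
    apply Integrable.mono' ((intervalIntegral.intervalIntegrable_rpow' (by linarith : (-1:ℝ) < p - 1)).1)
    · exact ((aux_cont p y).mono Set.Ioc_subset_Ioi_self).aestronglyMeasurable measurableSet_Ioc
    · filter_upwards [ae_restrict_mem measurableSet_Ioc] with x hx
      rw [Real.norm_eq_abs, abs_mul, abs_of_pos (Real.exp_pos _), abs_of_nonneg (Real.rpow_nonneg hx.1.le _)]
      calc Real.exp (-(x - y)^2) * x ^ (p-1) ≤ 1 * x ^ (p-1) := by
            apply mul_le_mul_of_nonneg_right _ (Real.rpow_nonneg hx.1.le _)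
            exact Real.exp_le_one_iff.2 (neg_nonpos.2 (sq_nonneg _))
        _ = x ^ (p-1) := one_mul _
  have h2 : IntegrableOn (fun x => Real.exp (-(x - y)^2) * x ^ (p - 1)) (Set.Ioi (1:ℝ)) := by
    apply Integrable.mono' ((gauss_shift y).integrableOn)
    · exact ((aux_cont p y).mono (Set.Ioi_subset_Ioi zero_le_one)).aestronglyMeasurable measurableSet_Ioi
    · filter_upwards [ae_restrict_mem measurableSet_Ioi] with x hx
      rw [Real.norm_eq_abs, abs_mul, abs_of_pos (Real.exp_pos _),
        abs_of_nonneg (Real.rpow_nonneg (by linarith [Set.mem_Ioi.1 hx] : (0:ℝ) ≤ x) _)]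
      calc Real.exp (-(x - y)^2) * x ^ (p-1) ≤ Real.exp (-(x - y)^2) * 1 := by
            apply mul_le_mul_of_nonneg_left _ (Real.exp_pos _).le
            exact Real.rpow_le_one_of_one_le_of_nonpos (le_of_lt hx) (by linarith)
        _ = _ := mul_one _
  have := h1.union h2
  rwa [Set.Ioc_union_Ioi_eq_Ioi zero_le_one] at this

lemma aux0 : Tendsto (fun y : ℝ => y * Real.exp (-(y/2)^2)) atTop (nhds 0) := by
  have h := (Real.tendsto_pow_mul_exp_neg_atTop_nhds_zero 1).const_mul (Real.exp 1)
  rw [mul_zero] at h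
  apply squeeze_zero' (g := fun y => Real.exp 1 * (y ^ 1 * Real.exp (-y))) _ _ h
  · filter_upwards [eventually_ge_atTop (0:ℝ)] with y hy
    positivity
  · filter_upwards [eventually_ge_atTop (0:ℝ)] with y hy
    rw [pow_one, ← mul_assoc, mul_comm (Real.exp 1) y, mul_assoc, ← Real.exp_add]
    apply mul_le_mul_of_nonneg_left _ hy
    apply Real.exp_le_exp.2
    nlinarith [sq_nonneg (y/2 - 1)]

lemma shift_Ioi (g : ℝ → ℝ) (c y : ℝ) :
    ∫ x in Set.Ioi c, g x = ∫ t in Set.Ioi (c - y), g (t + y) := by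
  rw [← integral_indicator measurableSet_Ioi, ← integral_indicator measurableSet_Ioi,
    ← MeasureTheory.integral_add_right_eq_self (fun x => (Set.Ioi c).indicator g x) y]
  congr 1
  ext t
  by_cases h : c - y < t
  · rw [Set.indicator_of_mem (by simpa using (by linarith : c < t + y)),
      Set.indicator_of_mem (by simpa using h)]
  · rw [Set.indicator_of_notMem (by simpa using (by linarith [not_lt.1 h] : ¬ c < t + y)),
      Set.indicator_of_notMem (by simpa using h)]

lemma rpow_int_val (p : ℝ) (hp : 0 < p) (hp1 : p < 1) (c : ℝ) (hc : 0 ≤ c) :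
    ∫ x in Set.Ioc (0:ℝ) c, x ^ (p - 1) = c ^ p / p := by
  rw [← intervalIntegral.integral_of_le hc, integral_rpow (Or.inl (by linarith)),
    sub_add_cancel, Real.zero_rpow hp.ne', sub_zero]

lemma gauss_int : ∫ t : ℝ, Real.exp (-t^2) = Real.sqrt π := by
  have := integral_gaussian 1
  simpa using this

lemma aux_B (p : ℝ) (hp : 0 < p) (hp1 : p < 1) :
    Tendsto (fun y : ℝ => ∫ t, ((Set.Ioi (-(y/2))).indicator
      (fun t => Real.exp (-t^2) * ((t+y)/y) ^ (p-1))) t) atTop (nhds (Real.sqrt π)) := by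
  rw [← gauss_int]
  apply tendsto_integral_filter_of_dominated_convergence
    (bound := fun t => 2^(1-p) * Real.exp (-t^2))
  · filter_upwards with y
    apply AEStronglyMeasurable.indicator _ measurableSet_Ioi
    apply Measurable.aestronglyMeasurable
    measurability
  · filter_upwards [eventually_gt_atTop (0:ℝ)] with y hy
    filter_upwards with t
    rw [Real.norm_eq_abs]
    by_cases ht : t ∈ Set.Ioi (-(y/2))
    · rw [Set.indicator_of_mem ht]
      have h1 : (1:ℝ)/2 ≤ (t+y)/y := by
        rw [div_le_div_iff₀ (by norm_num) hy]
        have := Set.mem_Ioi.1 ht; linarith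
      have h2 : ((t+y)/y) ^ (p-1) ≤ (1/2 : ℝ) ^ (p-1) :=
        Real.rpow_le_rpow_of_nonpos (by norm_num) h1 (by linarith)
      have h3 : ((1:ℝ)/2) ^ (p-1) = 2 ^ (1-p) := by
        rw [one_div, ← Real.rpow_neg_one 2, ← Real.rpow_mul (by norm_num)]
        ring_nf
      rw [abs_mul, abs_of_pos (Real.exp_pos _),
        abs_of_nonneg (Real.rpow_nonneg (by positivity) _), mul_comm]
      apply mul_le_mul_of_nonneg_right _ (Real.exp_pos _).le
      rw [← h3]; exact h2
    · rw [Set.indicator_of_notMem ht, abs_zero]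
      positivity
  · exact (Integrable.const_mul (by simpa using integrable_exp_neg_mul_sq one_pos) _)
  · filter_upwards with t
    have hev : (fun y : ℝ => Real.exp (-t^2) * (t/y + 1) ^ (p-1)) =ᶠ[atTop]
        (fun y => ((Set.Ioi (-(y/2))).indicator
        (fun t => Real.exp (-t^2) * ((t+y)/y) ^ (p-1))) t) := by
      filter_upwards [eventually_gt_atTop (0:ℝ), eventually_gt_atTop (-2*t)] with y hy hy2
      rw [Set.indicator_of_mem (by simp only [Set.mem_Ioi]; linarith)]
      rw [add_div, div_self hy.ne']
    rw [show Real.exp (-t^2) = Real.exp (-t^2) * (1:ℝ)^(p-1) by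
      rw [Real.one_rpow, mul_one]]
    apply Tendsto.congr' hev
    apply Tendsto.const_mul
    have h4 : Tendsto (fun y : ℝ => t/y + 1) atTop (nhds 1) := by
      have := (tendsto_inv_atTop_zero (𝕜 := ℝ)).const_mul t
      rw [mul_zero] at this
      have := this.add_const 1
      rw [zero_add] at this
      simpa [div_eq_mul_inv] using this
    have h5 := (Real.continuousAt_rpow_const 1 (p-1) (Or.inl one_ne_zero)).tendsto.comp h4
    simpa [Function.comp_def] using h5

lemma rpow_intg (p : ℝ) (hp : 0 < p) (c : ℝ) :
    IntegrableOn (fun x : ℝ => x ^ (p - 1)) (Set.Ioc 0 c) :=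
  (intervalIntegral.intervalIntegrable_rpow' (by linarith : (-1:ℝ) < p - 1)).1

lemma TA (p : ℝ) (hp : 0 < p) (hp1 : p < 1) :
    Tendsto (fun y : ℝ => y ^ (1-p) * ∫ x in Set.Ioc (0:ℝ) (y/2),
      Real.exp (-(x - y)^2) * x ^ (p - 1)) atTop (nhds 0) := by
  have hA : ∀ y : ℝ, 0 < y → (∫ x in Set.Ioc (0:ℝ) (y/2), Real.exp (-(x - y)^2) * x ^ (p - 1))
      ≤ Real.exp (-(y/2)^2) * ((y/2) ^ p / p) := by
    intro y hy
    have step : (∫ x in Set.Ioc (0:ℝ) (y/2), Real.exp (-(x - y)^2) * x ^ (p - 1))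
        ≤ ∫ x in Set.Ioc (0:ℝ) (y/2), Real.exp (-(y/2)^2) * x ^ (p - 1) := by
      apply setIntegral_mono_on
      · exact (aux_int p hp hp1 y).mono_set Set.Ioc_subset_Ioi_self
      · exact (rpow_intg p hp (y/2)).const_mul _
      · exact measurableSet_Ioc
      · intro x hx
        apply mul_le_mul_of_nonneg_right _ (Real.rpow_nonneg hx.1.le _)
        apply Real.exp_le_exp.2
        have h1 := hx.2
        nlinarith [hx.1]
    rwa [MeasureTheory.integral_const_mul, rpow_int_val p hp hp1 (y/2) (by positivity)] at step
  apply squeeze_zero' (g := fun y => (2:ℝ)^(-p)/p * (y * Real.exp (-(y/2)^2)))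
  · filter_upwards [eventually_gt_atTop (0:ℝ)] with y hy
    apply mul_nonneg (Real.rpow_nonneg hy.le _)
    apply setIntegral_nonneg measurableSet_Ioc
    intro x hx
    exact mul_nonneg (Real.exp_pos _).le (Real.rpow_nonneg hx.1.le _)
  · filter_upwards [eventually_gt_atTop (0:ℝ)] with y hy
    calc y ^ (1-p) * ∫ x in Set.Ioc (0:ℝ) (y/2), Real.exp (-(x - y)^2) * x ^ (p - 1)
        ≤ y ^ (1-p) * (Real.exp (-(y/2)^2) * ((y/2) ^ p / p)) :=
          mul_le_mul_of_nonneg_left (hA y hy) (Real.rpow_nonneg hy.le _)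
      _ = (2:ℝ)^(-p)/p * (y * Real.exp (-(y/2)^2)) := by
          rw [Real.div_rpow hy.le (by norm_num : (0:ℝ) ≤ 2)]
          have h2 : y ^ (1-p) * y ^ p = y := by
            rw [← Real.rpow_add hy, sub_add_cancel, Real.rpow_one]
          have h3 : ((2:ℝ) ^ p)⁻¹ = (2:ℝ)^(-p) := (Real.rpow_neg (by norm_num) p).symm
          rw [show y ^ (1-p) * (Real.exp (-(y/2)^2) * (y ^ p / 2 ^ p / p))
              = (y ^ (1-p) * y ^ p) * Real.exp (-(y/2)^2) * (((2:ℝ) ^ p)⁻¹ / p) from by ring,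
            h2, h3]
          ring
  · have := aux0.const_mul ((2:ℝ)^(-p)/p)
    simpa using this

lemma TB (p : ℝ) (hp : 0 < p) (hp1 : p < 1) :
    Tendsto (fun y : ℝ => y ^ (1-p) * ∫ x in Set.Ioi (y/2),
      Real.exp (-(x - y)^2) * x ^ (p - 1)) atTop (nhds (Real.sqrt π)) := by
  apply (aux_B p hp hp1).congr'
  filter_upwards [eventually_gt_atTop (0:ℝ)] with y hy
  have e1 : (∫ x in Set.Ioi (y/2), Real.exp (-(x - y)^2) * x ^ (p - 1))
      = ∫ t in Set.Ioi (-(y/2)), Real.exp (-t^2) * (t+y) ^ (p - 1) := by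
    rw [shift_Ioi _ (y/2) y, show y/2 - y = -(y/2) by ring]
    apply setIntegral_congr_fun measurableSet_Ioi
    intro t _
    simp [add_sub_cancel_right]
  rw [e1, ← MeasureTheory.integral_indicator measurableSet_Ioi,
    ← MeasureTheory.integral_const_mul]
  congr 1
  ext t
  by_cases ht : t ∈ Set.Ioi (-(y/2))
  · rw [Set.indicator_of_mem ht, Set.indicator_of_mem ht]
    have htp : (0:ℝ) < t + y := by have := Set.mem_Ioi.1 ht; linarith
    rw [Real.div_rpow htp.le hy.le, div_eq_mul_inv, ← Real.rpow_neg hy.le,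
      show -(p-1) = 1-p by ring]
    ring
  · rw [Set.indicator_of_notMem ht, Set.indicator_of_notMem ht, mul_zero]

lemma aux_ub (p : ℝ) (hp : 0 < p) (hp1 : p < 1) (y : ℝ) :
    (∫ x in Set.Ioi (0:ℝ), Real.exp (-(x - y)^2) * x ^ (p - 1)) ≤ 1/p + Real.sqrt π := by
  rw [← Set.Ioc_union_Ioi_eq_Ioi zero_le_one,
    setIntegral_union (Set.Ioc_disjoint_Ioi le_rfl) measurableSet_Ioi
      ((aux_int p hp hp1 y).mono_set Set.Ioc_subset_Ioi_self)
      ((aux_int p hp hp1 y).mono_set (Set.Ioi_subset_Ioi zero_le_one))]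
  apply add_le_add
  · calc (∫ x in Set.Ioc (0:ℝ) 1, Real.exp (-(x - y)^2) * x ^ (p - 1))
        ≤ ∫ x in Set.Ioc (0:ℝ) 1, x ^ (p - 1) := by
          apply setIntegral_mono_on
            ((aux_int p hp hp1 y).mono_set Set.Ioc_subset_Ioi_self)
            (rpow_intg p hp 1) measurableSet_Ioc
          intro x hx
          calc Real.exp (-(x - y)^2) * x ^ (p-1) ≤ 1 * x ^ (p-1) :=
                mul_le_mul_of_nonneg_right
                  (Real.exp_le_one_iff.2 (neg_nonpos.2 (sq_nonneg _)))
                  (Real.rpow_nonneg hx.1.le _)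
            _ = x ^ (p-1) := one_mul _
      _ = 1/p := by rw [rpow_int_val p hp hp1 1 zero_le_one, Real.one_rpow]
  · calc (∫ x in Set.Ioi (1:ℝ), Real.exp (-(x - y)^2) * x ^ (p - 1))
        ≤ ∫ x in Set.Ioi (1:ℝ), Real.exp (-(x - y)^2) := by
          apply setIntegral_mono_on
            ((aux_int p hp hp1 y).mono_set (Set.Ioi_subset_Ioi zero_le_one))
            (gauss_shift y).integrableOn measurableSet_Ioi
          intro x hx
          calc Real.exp (-(x - y)^2) * x ^ (p-1) ≤ Real.exp (-(x - y)^2) * 1 :=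
                mul_le_mul_of_nonneg_left
                  (Real.rpow_le_one_of_one_le_of_nonpos (le_of_lt hx) (by linarith))
                  (Real.exp_pos _).le
            _ = _ := mul_one _
      _ ≤ ∫ x : ℝ, Real.exp (-(x - y)^2) :=
          setIntegral_le_integral (gauss_shift y)
            (Filter.Eventually.of_forall fun x => (Real.exp_pos _).le)
      _ = Real.sqrt π := by
          rw [MeasureTheory.integral_sub_right_eq_self (fun x => Real.exp (-x^2)) y, gauss_int]

lemma h_meas (p : ℝ) : Measurable (fun y : ℝ =>
    ∫ x in Set.Ioi (0:ℝ), Real.exp (-(x - y)^2) * x ^ (p - 1)) := by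
  have heq : (fun y : ℝ => ∫ x in Set.Ioi (0:ℝ), Real.exp (-(x - y)^2) * x ^ (p - 1))
      = fun y => ∫ x, ((Set.univ ×ˢ Set.Ioi (0:ℝ)).indicator
          (fun q : ℝ × ℝ => Real.exp (-(q.2 - q.1)^2) * q.2 ^ (p-1))) (y, x) := by
    funext y
    rw [← MeasureTheory.integral_indicator measurableSet_Ioi]
    congr 1
    funext x
    by_cases hx : x ∈ Set.Ioi (0:ℝ)
    · rw [Set.indicator_of_mem hx, Set.indicator_of_mem (by simp [hx])]
    · rw [Set.indicator_of_notMem hx, Set.indicator_of_notMem (by simp [hx])]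
  rw [heq]
  have hm : Measurable (fun q : ℝ × ℝ => (Set.univ ×ˢ Set.Ioi (0:ℝ)).indicator
      (fun q : ℝ × ℝ => Real.exp (-(q.2 - q.1)^2) * q.2 ^ (p-1)) q) := by measurability
  exact hm.stronglyMeasurable.integral_prod_right'.measurable

theorem h_minus_asymptotics (p : ℝ) (hp : 0 < p) (hp1 : p < 1) (n : ℕ) (hn : 2 ≤ n)
    (h : ℝ → ℝ)
    (hh : ∀ y, h y = p * ∫ x in Set.Ioi (0:ℝ), Real.exp (-(x - y)^2) * x ^ (p - 1)) :
    Tendsto (fun y => y ^ (1 - p) * h y) atTop (nhds (p * Real.sqrt π)) ∧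
    ((n : ℝ) * p < (n : ℝ) - 1 →
      IntegrableOn (fun y => (h y)^n) (Set.Ioi (0:ℝ))) := by
  have T : Tendsto (fun y => y ^ (1 - p) * h y) atTop (nhds (p * Real.sqrt π)) := by
    have hsum := ((TA p hp hp1).const_mul p).add ((TB p hp hp1).const_mul p)
    rw [mul_zero, zero_add] at hsum
    apply hsum.congr'
    filter_upwards [eventually_gt_atTop (0:ℝ)] with y hy
    have hspl : (∫ x in Set.Ioi (0:ℝ), Real.exp (-(x - y)^2) * x ^ (p-1))
        = (∫ x in Set.Ioc (0:ℝ) (y/2), Real.exp (-(x - y)^2) * x ^ (p-1))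
          + ∫ x in Set.Ioi (y/2), Real.exp (-(x - y)^2) * x ^ (p-1) := by
      rw [← Set.Ioc_union_Ioi_eq_Ioi (by positivity : (0:ℝ) ≤ y/2),
        setIntegral_union (Set.Ioc_disjoint_Ioi le_rfl) measurableSet_Ioi
          ((aux_int p hp hp1 y).mono_set Set.Ioc_subset_Ioi_self)
          ((aux_int p hp hp1 y).mono_set (Set.Ioi_subset_Ioi (by positivity)))]
    rw [hh y, hspl]
    ring
  refine ⟨T, fun hnp => ?_⟩
  have hnn : ∀ y, 0 ≤ h y := by
    intro y
    rw [hh y]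
    exact mul_nonneg hp.le (setIntegral_nonneg measurableSet_Ioi fun x hx =>
      mul_nonneg (Real.exp_pos _).le (Real.rpow_nonneg (le_of_lt hx) _))
  have hub : ∀ y, h y ≤ 1 + p * Real.sqrt π := by
    intro y
    rw [hh y]
    calc p * ∫ x in Set.Ioi (0:ℝ), Real.exp (-(x - y)^2) * x ^ (p-1)
        ≤ p * (1/p + Real.sqrt π) :=
          mul_le_mul_of_nonneg_left (aux_ub p hp hp1 y) hp.le
      _ = 1 + p * Real.sqrt π := by field_simp
  have hmeas : Measurable h := by
    have : h = fun y => p * ∫ x in Set.Ioi (0:ℝ), Real.exp (-(x - y)^2) * x ^ (p-1) :=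
      funext hh
    rw [this]
    exact (h_meas p).const_mul p
  set C := p * Real.sqrt π + 1 with hC_def
  have hCpos : 0 < C := by positivity
  have hev : ∀ᶠ y in atTop, y ^ (1-p) * h y ≤ C :=
    T.eventually (eventually_le_nhds (lt_add_one _))
  obtain ⟨M, hM⟩ := eventually_atTop.1 (hev.and (eventually_ge_atTop (1:ℝ)))
  set M0 := max M 1 with hM0_def
  have hM01 : (1:ℝ) ≤ M0 := le_max_right _ _
  have hM0pos : (0:ℝ) < M0 := lt_of_lt_of_le one_pos hM01
  have I1 : IntegrableOn (fun y => (h y)^n) (Set.Ioc (0:ℝ) M0) := by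
    apply Integrable.mono' (g := fun _ => (1 + p * Real.sqrt π)^n)
      (integrableOn_const measure_Ioc_lt_top.ne)
      ((hmeas.pow_const n).aestronglyMeasurable.restrict)
    filter_upwards with y
    rw [Real.norm_eq_abs, abs_pow, abs_of_nonneg (hnn y)]
    exact pow_le_pow_left₀ (hnn y) (hub y) n
  have hlt : (p - 1) * (n:ℝ) < -1 := by
    have hn2 : (2:ℝ) ≤ (n:ℝ) := by exact_mod_cast hn
    nlinarith
  have I2 : IntegrableOn (fun y => (h y)^n) (Set.Ioi M0) := by
    apply Integrable.mono' (g := fun y => C^n * y ^ ((p-1) * (n:ℝ)))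
      ((integrableOn_Ioi_rpow_of_lt hlt hM0pos).const_mul _)
      ((hmeas.pow_const n).aestronglyMeasurable.restrict)
    filter_upwards [ae_restrict_mem measurableSet_Ioi] with y hy
    have hy0 : (0:ℝ) < y := lt_trans hM0pos (Set.mem_Ioi.1 hy)
    have hkey : h y ≤ y ^ (p-1) * C := by
      have h1 := (hM y (le_trans (le_max_left M 1) (Set.mem_Ioi.1 hy).le)).1
      have h2 : y ^ (p-1) * y ^ (1-p) = 1 := by
        rw [← Real.rpow_add hy0, show p - 1 + (1-p) = 0 by ring, Real.rpow_zero]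
      calc h y = y ^ (p-1) * (y ^ (1-p) * h y) := by
            rw [← mul_assoc, h2, one_mul]
        _ ≤ y ^ (p-1) * C :=
            mul_le_mul_of_nonneg_left h1 (Real.rpow_nonneg hy0.le _)
    rw [Real.norm_eq_abs, abs_pow, abs_of_nonneg (hnn y)]
    calc (h y)^n ≤ (y ^ (p-1) * C)^n := pow_le_pow_left₀ (hnn y) hkey n
      _ = C^n * y ^ ((p-1) * (n:ℝ)) := by
          rw [mul_pow, Real.rpow_mul (by linarith : (0:ℝ) ≤ y), Real.rpow_natCast]
          ring
  have := I1.union I2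
  rwa [Set.Ioc_union_Ioi_eq_Ioi hM0pos.le] at this
end

section
/- Let f be a probability density on (0,1) with f ∈ L^p(0,1) for some p > 1 such that n(1 - 1/p) > 1. Let Q = ∑_{i=1}^n (Xᵢ - X̄)² for an i.i.d. sample X₁,…,Xₙ with density f. Then the Laplace transform f*_Q(t) = E[exp(-tQ)] satisfies f*_Q(t) = O(t^{-δ_p}) as t → ∞, where δ_p = (n(1-1/p) - 1)/2. -/
open MeasureTheory ProbabilityTheory Filter Real
open scoped NNReal ENNReal

lemma aux_sum_sq {m : ℕ} (x : Fin (m+1) → ℝ) :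
    ∑ i, (x i - x 0)^2 ≤ 4*((m:ℝ)+1) * ∑ i, (x i - (∑ j, x j)/((m:ℝ)+1))^2 := by
  set c := (∑ j, x j)/((m:ℝ)+1) with hc
  have hQ0 : 0 ≤ ∑ i, (x i - c)^2 := Finset.sum_nonneg fun i _ => sq_nonneg _
  have h0 : (x 0 - c)^2 ≤ ∑ i, (x i - c)^2 :=
    Finset.single_le_sum (f := fun i => (x i - c)^2) (fun i _ => sq_nonneg _) (Finset.mem_univ (0 : Fin (m+1)))
  have h1 : ∑ i, (x i - x 0)^2 ≤ ∑ i : Fin (m+1), (2*(x i - c)^2 + 2*(x 0 - c)^2) := by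
    apply Finset.sum_le_sum; intro i _; nlinarith [sq_nonneg (x i + x 0 - 2*c)]
  have h2 : ∑ i : Fin (m+1), (2*(x i - c)^2 + 2*(x 0 - c)^2)
      = 2*(∑ i, (x i - c)^2) + ((m:ℝ)+1)*(2*(x 0 - c)^2) := by
    rw [Finset.sum_add_distrib, Finset.sum_const, ← Finset.mul_sum]
    simp [Finset.card_univ, mul_comm]
  have hm : (0:ℝ) ≤ (m:ℝ) := Nat.cast_nonneg m
  nlinarith [mul_le_mul_of_nonneg_left h0 (by linarith : (0:ℝ) ≤ 2*((m:ℝ)+1))]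

lemma aux_pi_integral {m : ℕ} (ν : Measure ℝ) [IsProbabilityMeasure ν] (g : ℝ → ℝ) :
    ∫ y : Fin m → ℝ, ∏ j, g (y j) ∂(Measure.pi fun _ => ν) = (∫ u, g u ∂ν)^m := by
  letI : MeasureSpace ℝ := ⟨ν⟩
  have := MeasureTheory.integral_fintype_prod_eq_pow (𝕜 := ℝ) (ι := Fin m) g (μ := ν)
  simpa [Fintype.card_fin] using this

theorem laplace_transform_sample_variance_bigO
    {Ω : Type*} [MeasurableSpace Ω] (μ : Measure Ω) [IsProbabilityMeasure μ]
    (n : ℕ) (hn : 2 ≤ n) (p : ℝ) (hp : 1 < p)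
    (hnp : (n : ℝ) * (1 - 1/p) > 1)
    (f : ℝ → ℝ) (hfnn : ∀ x, 0 ≤ f x)
    (hfLp : MemLp f (ENNReal.ofReal p) (volume.restrict (Set.Ioo (0:ℝ) 1)))
    (X : Fin n → Ω → ℝ) (hXm : ∀ i, Measurable (X i))
    (hindep : iIndepFun X μ)
    (hlaw : ∀ i, Measure.map (X i) μ =
      (volume.restrict (Set.Ioo (0:ℝ) 1)).withDensity (fun x => ENNReal.ofReal (f x)))
    (Q : Ω → ℝ) (hQ : ∀ ω, Q ω = ∑ i, (X i ω - (∑ j, X j ω) / n)^2) :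
    (fun t : ℝ => ∫ ω, Real.exp (-t * Q ω) ∂μ) =O[atTop]
      (fun t : ℝ => t ^ (-(((n : ℝ) * (1 - 1/p) - 1) / 2))) := by
  obtain ⟨m, rfl⟩ : ∃ m, n = m + 1 := ⟨n - 1, by omega⟩
  have hp0 : 0 < p := lt_trans one_pos hp
  set q : ℝ := p / (p - 1) with hqdef
  have hpq : p.HolderConjugate q := Real.HolderConjugate.conjExponent hp
  have hq1 : 1 < q := Real.HolderTriple.lt hpq.symm
  have hq0 : 0 < q := lt_trans one_pos hq1
  have hinvq : 1 - 1/p = 1/q := by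
    have h := hpq.inv_add_inv_eq_one
    rw [one_div, one_div]
    linarith
  set ν : Measure ℝ := (volume.restrict (Set.Ioo (0:ℝ) 1)).withDensity
      (fun x => ENNReal.ofReal (f x)) with hν
  haveI hνP : IsProbabilityMeasure ν := by
    rw [← hlaw 0]; exact Measure.isProbabilityMeasure_map (hXm 0).aemeasurable
  set pm : Measure (Fin (m+1) → ℝ) := Measure.pi (fun _ => ν) with hpm
  set T : Ω → (Fin (m+1) → ℝ) := fun ω i => X i ω with hTdef
  have hTm : Measurable T := measurable_pi_lambda _ hXm
  have hmap : Measure.map T μ = pm := by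
    rw [hpm]
    refine (Measure.pi_eq fun s hs => ?_).symm
    rw [Measure.map_apply hTm (MeasurableSet.univ_pi hs)]
    have hpre : T ⁻¹' Set.pi Set.univ s = ⋂ i ∈ Finset.univ, X i ⁻¹' s i := by
      ext ω; simp [Set.mem_pi, hTdef, Set.mem_iInter]
    rw [hpre, hindep.measure_inter_preimage_eq_mul Finset.univ (fun i _ => hs i)]
    refine Finset.prod_congr rfl fun i _ => ?_
    rw [← hlaw i, Measure.map_apply (hXm i) (hs i)]
  haveI : IsFiniteMeasure (volume.restrict (Set.Ioo (0:ℝ) 1)) :=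
    ⟨by rw [Measure.restrict_apply_univ]; simp [Real.volume_Ioo]⟩
  -- constants
  set Cf : ℝ := (∫ a in Set.Ioo (0:ℝ) 1, f a ^ p) ^ (1/p) with hCf
  have hCf0 : 0 ≤ Cf :=
    Real.rpow_nonneg (integral_nonneg fun a => Real.rpow_nonneg (hfnn a) p) _
  set D : ℝ := Real.sqrt (4*((m:ℝ)+1)*π/q) with hD
  have hD0 : 0 ≤ D := Real.sqrt_nonneg _
  set K : ℝ := (Cf * D ^ (1/q)) ^ m with hK
  have hK0 : 0 ≤ K := pow_nonneg (mul_nonneg hCf0 (Real.rpow_nonneg hD0 _)) m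
  rw [Asymptotics.isBigO_iff]
  refine ⟨K, ?_⟩
  filter_upwards [eventually_ge_atTop (1:ℝ)] with t ht
  have ht0 : (0:ℝ) < t := lt_of_lt_of_le one_pos ht
  set s : ℝ := t / (4*((m:ℝ)+1)) with hs
  have hm0 : (0:ℝ) ≤ (m:ℝ) := Nat.cast_nonneg m
  have hs0 : 0 < s := by rw [hs]; positivity
  have hst : s * (4*((m:ℝ)+1)) = t := by rw [hs]; field_simp
  -- the one-dimensional integral bound
  set B : ℝ := Cf * (D ^ (1/q) / t ^ ((1:ℝ)/2 * (1/q))) with hB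
  have hB0 : 0 ≤ B :=
    mul_nonneg hCf0 (div_nonneg (Real.rpow_nonneg hD0 _) (Real.rpow_nonneg ht0.le _))
  have hIle : ∀ c : ℝ, ∫ u, Real.exp (-(s * (u - c)^2)) ∂ν ≤ B := by
    intro c
    have hgc : Continuous fun u : ℝ => Real.exp (-(s * (u - c)^2)) :=
      Real.continuous_exp.comp ((continuous_const.mul ((continuous_id.sub continuous_const).pow 2)).neg)
    have step1 : ∫ u, Real.exp (-(s * (u - c)^2)) ∂ν
        = ∫ u in Set.Ioo (0:ℝ) 1, f u * Real.exp (-(s * (u - c)^2)) := by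
      rw [hν]
      have hfa : AEMeasurable (fun x => Real.toNNReal (f x))
          (volume.restrict (Set.Ioo (0:ℝ) 1)) :=
        hfLp.aestronglyMeasurable.aemeasurable.real_toNNReal
      rw [show (fun x => ENNReal.ofReal (f x))
          = fun x => ((Real.toNNReal (f x) : ℝ≥0) : ℝ≥0∞) from rfl]
      rw [integral_withDensity_eq_integral_smul₀ hfa]
      refine integral_congr_ae (Filter.Eventually.of_forall fun u => ?_)
      simp [NNReal.smul_def, Real.coe_toNNReal _ (hfnn u)]
    have hgLq : MemLp (fun u : ℝ => Real.exp (-(s * (u - c)^2))) (ENNReal.ofReal q)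
        (volume.restrict (Set.Ioo (0:ℝ) 1)) := by
      refine MemLp.of_bound hgc.aestronglyMeasurable 1
        (Filter.Eventually.of_forall fun u => ?_)
      rw [Real.norm_eq_abs, abs_of_pos (Real.exp_pos _)]
      exact Real.exp_le_one_iff.mpr (neg_nonpos_of_nonneg (by positivity))
    have hHolder := integral_mul_le_Lp_mul_Lq_of_nonneg hpq
      (Filter.Eventually.of_forall hfnn)
      (Filter.Eventually.of_forall fun u : ℝ => (Real.exp_pos (-(s * (u - c)^2))).le)
      hfLp hgLq
    have hsq : 0 < s * q := mul_pos hs0 hq0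
    have hint : Integrable (fun a : ℝ => Real.exp (-(s*q)*(a-c)^2)) volume :=
      (integrable_exp_neg_mul_sq hsq).comp_sub_right c
    have hgq : ∫ a in Set.Ioo (0:ℝ) 1, Real.exp (-(s * (a - c)^2)) ^ q
        ≤ Real.sqrt (π/(s*q)) := by
      have heq : ∀ a : ℝ, Real.exp (-(s*(a-c)^2)) ^ q = Real.exp (-(s*q)*(a-c)^2) := by
        intro a; rw [← Real.exp_mul]; congr 1; ring
      calc ∫ a in Set.Ioo (0:ℝ) 1, Real.exp (-(s * (a - c)^2)) ^ q
          = ∫ a in Set.Ioo (0:ℝ) 1, Real.exp (-(s*q)*(a-c)^2) := by simp_rw [heq]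
        _ ≤ ∫ a, Real.exp (-(s*q)*(a-c)^2) :=
            setIntegral_le_integral hint
              (Filter.Eventually.of_forall fun a => (Real.exp_pos _).le)
        _ = ∫ a, Real.exp (-(s*q)*a^2) :=
            integral_sub_right_eq_self (fun a => Real.exp (-(s*q)*a^2)) c
        _ = Real.sqrt (π/(s*q)) := integral_gaussian _
    have hfact : (∫ a in Set.Ioo (0:ℝ) 1, Real.exp (-(s * (a - c)^2)) ^ q) ^ (1/q)
        ≤ Real.sqrt (π/(s*q)) ^ (1/q) := by
      refine Real.rpow_le_rpow ?_ hgq (by positivity)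
      exact integral_nonneg fun a => Real.rpow_nonneg (Real.exp_pos _).le q
    have hsqrt : Real.sqrt (π/(s*q)) ^ (1/q) = D ^ (1/q) / t ^ ((1:ℝ)/2 * (1/q)) := by
      have h1 : π/(s*q) = (4*((m:ℝ)+1)*π/q)/t := by
        rw [hs]; field_simp
      rw [h1, Real.sqrt_div (by positivity) t, ← hD,
        Real.div_rpow hD0 (Real.sqrt_nonneg t), Real.sqrt_eq_rpow t,
        ← Real.rpow_mul ht0.le]
    calc ∫ u, Real.exp (-(s * (u - c)^2)) ∂ν
        = ∫ u in Set.Ioo (0:ℝ) 1, f u * Real.exp (-(s * (u - c)^2)) := step1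
      _ ≤ Cf * (∫ a in Set.Ioo (0:ℝ) 1, Real.exp (-(s * (a - c)^2)) ^ q) ^ (1/q) := hHolder
      _ ≤ Cf * (D ^ (1/q) / t ^ ((1:ℝ)/2 * (1/q))) := by
          rw [← hsqrt]
          exact mul_le_mul_of_nonneg_left hfact hCf0
  -- main estimate
  have main : ∫ ω, Real.exp (-t * Q ω) ∂μ ≤ B ^ m := by
    have e1 : ∫ ω, Real.exp (-t * Q ω) ∂μ
        = ∫ x : Fin (m+1) → ℝ, Real.exp (-t * ∑ i, (x i - (∑ j, x j)/((m:ℝ)+1))^2) ∂pm := by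
      have hcomp : (fun ω => Real.exp (-t * Q ω))
          = fun ω => (fun x : Fin (m+1) → ℝ =>
              Real.exp (-t * ∑ i, (x i - (∑ j, x j)/((m:ℝ)+1))^2)) (T ω) := by
        funext ω
        rw [hQ ω]
        congr 1
        push_cast
        ring
      rw [hcomp, ← hmap]
      rw [integral_map hTm.aemeasurable]
      have hqfc : Continuous fun x : Fin (m+1) → ℝ =>
          ∑ i, (x i - (∑ j, x j)/((m:ℝ)+1))^2 := by
        apply continuous_finset_sum; intro i _
        exact ((continuous_apply i).sub
          ((continuous_finset_sum _ fun j _ => continuous_apply j).div_const _)).pow 2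
      exact (Real.continuous_exp.comp ((continuous_const.mul hqfc : Continuous fun x : Fin (m+1) → ℝ => (-t) * ∑ i, (x i - (∑ j, x j)/((m:ℝ)+1))^2))).aestronglyMeasurable
    rw [e1]
    have hmeasprod : Measurable fun x : Fin (m+1) → ℝ =>
        ∏ j, Real.exp (-(s * (x j - x 0)^2)) := by
      apply Finset.measurable_prod
      intro j _
      exact Real.measurable_exp.comp
        (Measurable.neg (f := fun a : Fin (m+1) → ℝ => s * (a j - a 0)^2)
          (((Measurable.sub (f := fun a : Fin (m+1) → ℝ => a j) (g := fun a => a 0)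
            (measurable_pi_apply j) (measurable_pi_apply 0)).pow_const 2).const_mul s))
    have hb : ∫ x : Fin (m+1) → ℝ, Real.exp (-t * ∑ i, (x i - (∑ j, x j)/((m:ℝ)+1))^2) ∂pm
        ≤ ∫ x : Fin (m+1) → ℝ, ∏ j, Real.exp (-(s * (x j - x 0)^2)) ∂pm := by
      refine integral_mono_of_nonneg
        (Filter.Eventually.of_forall fun x => (Real.exp_pos _).le) ?_
        (Filter.Eventually.of_forall fun x => ?_)
      · refine Integrable.mono' (integrable_const 1) hmeasprod.aestronglyMeasurable
          (Filter.Eventually.of_forall fun x => ?_)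
        rw [Real.norm_eq_abs, abs_of_nonneg (Finset.prod_nonneg fun j _ => (Real.exp_pos _).le)]
        exact Finset.prod_le_one (fun j _ => (Real.exp_pos _).le)
          (fun j _ => Real.exp_le_one_iff.mpr (neg_nonpos_of_nonneg (by positivity)))
      · dsimp only
        rw [← Real.exp_sum]
        apply Real.exp_le_exp.mpr
        have hsum : ∑ j, -(s * (x j - x 0)^2) = -(s * ∑ j, (x j - x 0)^2) := by
          rw [Finset.mul_sum, ← Finset.sum_neg_distrib]
        rw [hsum]
        have haux := aux_sum_sq x
        have h1 : s * ∑ j, (x j - x 0)^2 ≤ t * ∑ i, (x i - (∑ j, x j)/((m:ℝ)+1))^2 := by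
          calc s * ∑ j, (x j - x 0)^2
              ≤ s * (4*((m:ℝ)+1) * ∑ i, (x i - (∑ j, x j)/((m:ℝ)+1))^2) :=
                mul_le_mul_of_nonneg_left haux hs0.le
            _ = t * ∑ i, (x i - (∑ j, x j)/((m:ℝ)+1))^2 := by rw [← hst]; ring
        linarith
    refine hb.trans ?_
    -- pass to product measure
    have MP := (measurePreserving_piFinSuccAbove (fun _ : Fin (m+1) => ν) 0).symm
    rw [hpm, ← MP.integral_comp']
    have hsimp : ∀ z : ℝ × (Fin m → ℝ),
        (∏ j, Real.exp (-(s * (((MeasurableEquiv.piFinSuccAbove (fun _ : Fin (m+1) => ℝ) 0).symm z) j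
          - ((MeasurableEquiv.piFinSuccAbove (fun _ : Fin (m+1) => ℝ) 0).symm z) 0)^2)))
        = ∏ j : Fin m, Real.exp (-(s * (z.2 j - z.1)^2)) := by
      intro z
      simp only [MeasurableEquiv.piFinSuccAbove_symm_apply, Fin.insertNthEquiv,
        Fin.insertNth_zero, Equiv.coe_fn_mk, Fin.prod_univ_succ, Fin.cons_zero, Fin.cons_succ,
        Fin.zero_succAbove, cast_eq]
      rw [sub_self]
      norm_num
    calc ∫ z : ℝ × (Fin m → ℝ),
          (∏ j, Real.exp (-(s * (((MeasurableEquiv.piFinSuccAbove (fun _ : Fin (m+1) => ℝ) 0).symm z) j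
            - ((MeasurableEquiv.piFinSuccAbove (fun _ : Fin (m+1) => ℝ) 0).symm z) 0)^2)))
          ∂(ν.prod (Measure.pi fun _ : Fin m => ν))
        = ∫ z : ℝ × (Fin m → ℝ), ∏ j : Fin m, Real.exp (-(s * (z.2 j - z.1)^2))
          ∂(ν.prod (Measure.pi fun _ : Fin m => ν)) := by
          exact integral_congr_ae (Filter.Eventually.of_forall hsimp)
      _ = ∫ c : ℝ, ∫ y : Fin m → ℝ, ∏ j : Fin m, Real.exp (-(s * (y j - c)^2))
          ∂(Measure.pi fun _ : Fin m => ν) ∂ν := by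
          refine integral_prod _ ?_
          have hmeas2 : Measurable fun z : ℝ × (Fin m → ℝ) =>
              ∏ j : Fin m, Real.exp (-(s * (z.2 j - z.1)^2)) := by
            apply Finset.measurable_prod
            intro j _
            have h1 : Measurable fun z : ℝ × (Fin m → ℝ) => z.2 j - z.1 :=
              ((measurable_pi_apply j).comp measurable_snd).sub measurable_fst
            exact Real.measurable_exp.comp (((h1.pow_const 2).const_mul s).neg)
          refine Integrable.mono' (integrable_const 1) hmeas2.aestronglyMeasurable
            (Filter.Eventually.of_forall fun z => ?_)
          rw [Real.norm_eq_abs, abs_of_nonneg (Finset.prod_nonneg fun j _ => (Real.exp_pos _).le)]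
          exact Finset.prod_le_one (fun j _ => (Real.exp_pos _).le)
            (fun j _ => Real.exp_le_one_iff.mpr (neg_nonpos_of_nonneg (by positivity)))
      _ = ∫ c : ℝ, (∫ u, Real.exp (-(s * (u - c)^2)) ∂ν)^m ∂ν := by
          refine integral_congr_ae (Filter.Eventually.of_forall fun c => ?_)
          exact aux_pi_integral ν (fun u => Real.exp (-(s * (u - c)^2)))
      _ ≤ ∫ _ : ℝ, B^m ∂ν := by
          refine integral_mono_of_nonneg
            (Filter.Eventually.of_forall fun c =>
              pow_nonneg (integral_nonneg fun u => (Real.exp_pos _).le) m)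
            (integrable_const _)
            (Filter.Eventually.of_forall fun c => ?_)
          exact pow_le_pow_left₀ (integral_nonneg fun u => (Real.exp_pos _).le) (hIle c) m
      _ = B^m := by simp
  -- conclude
  have hexp : B ^ m = K * t ^ (-((1:ℝ)/2 * (1/q) * m)) := by
    rw [hB, hK, mul_pow, mul_pow, div_pow]
    have h2 : (t ^ ((1:ℝ)/2 * (1/q))) ^ m = t ^ ((1:ℝ)/2 * (1/q) * m) := by
      rw [← Real.rpow_natCast (t ^ ((1:ℝ)/2 * (1/q))) m, ← Real.rpow_mul ht0.le]
    rw [h2, div_eq_mul_inv, ← Real.rpow_neg ht0.le]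
    ring
  have hexple : t ^ (-((1:ℝ)/2 * (1/q) * m)) ≤ t ^ (-((((m:ℝ)+1) * (1 - 1/p) - 1) / 2)) := by
    apply Real.rpow_le_rpow_of_exponent_le ht
    rw [hinvq]
    have hq_le : 1/q ≤ 1 := by
      rw [div_le_one hq0]; exact hq1.le
    have hq_nonneg : 0 ≤ 1/q := by positivity
    nlinarith
  have hInn : 0 ≤ ∫ ω, Real.exp (-t * Q ω) ∂μ :=
    integral_nonneg fun ω => (Real.exp_pos _).le
  have hRn : 0 ≤ t ^ (-((((m:ℝ)+1) * (1 - 1/p) - 1) / 2)) := Real.rpow_nonneg ht0.le _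
  rw [Real.norm_eq_abs, Real.norm_eq_abs, abs_of_nonneg hInn]
  have hcast : (((m+1 : ℕ)):ℝ) = (m:ℝ)+1 := by push_cast; ring
  rw [hcast, abs_of_nonneg hRn]
  calc ∫ ω, Real.exp (-t * Q ω) ∂μ ≤ B ^ m := main
    _ = K * t ^ (-((1:ℝ)/2 * (1/q) * m)) := hexp
    _ ≤ K * t ^ (-((((m:ℝ)+1) * (1 - 1/p) - 1) / 2)) :=
        mul_le_mul_of_nonneg_left hexple hK0
end

section
/- Let X₁,…,Xₙ be i.i.d. random variables with values in [0,1] and let Q = ∑(Xᵢ - X̄)². Then the characteristic function of Q satisfies f̂_Q(t) = √(n/π) ∫_{-∞}^∞ (ψ(t,y))ⁿ dy, where ψ(t,y) = E[exp(-(y + √(-it) X)²)] and √(-it) is the principal square root. -/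
open MeasureTheory ProbabilityTheory Complex

section helpers
variable {Ω : Type*} [MeasurableSpace Ω] {μ : Measure Ω} [IsProbabilityMeasure μ]

private lemma csplit (A B C D : ℝ) : ((A:ℂ)+B*I)*((C:ℂ)+D*I) = ((A*C-B*D:ℝ):ℂ) + ((A*D+B*C:ℝ):ℂ)*I := by
  push_cast
  ring_nf
  rw [Complex.I_sq]
  ring

omit [IsProbabilityMeasure μ] in
private lemma integral_complex_split (f : Ω → ℂ) (hf : Integrable f μ) :
    ∫ ω, f ω ∂μ = ((∫ ω, (f ω).re ∂μ : ℝ) : ℂ) + ((∫ ω, (f ω).im ∂μ : ℝ) : ℂ) * I := by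
  have h1 : (∫ ω, f ω ∂μ).re = ∫ ω, (f ω).re ∂μ := by
    simpa [RCLike.re_to_complex] using (integral_re hf).symm
  have h2 : (∫ ω, f ω ∂μ).im = ∫ ω, (f ω).im ∂μ := by
    simpa [RCLike.im_to_complex] using (integral_im hf).symm
  rw [← h1, ← h2, Complex.re_add_im]

private lemma indep_integral_mul_complex {f g : Ω → ℂ} (h : IndepFun f g μ)
    (hfi : Integrable f μ) (hgi : Integrable g μ) :
    ∫ ω, f ω * g ω ∂μ = (∫ ω, f ω ∂μ) * ∫ ω, g ω ∂μ := by
  have ha : Integrable (fun ω => (f ω).re) μ := hfi.re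
  have hb : Integrable (fun ω => (f ω).im) μ := hfi.im
  have hc : Integrable (fun ω => (g ω).re) μ := hgi.re
  have hd : Integrable (fun ω => (g ω).im) μ := hgi.im
  have hac : IndepFun (fun ω => (f ω).re) (fun ω => (g ω).re) μ :=
    h.comp Complex.measurable_re Complex.measurable_re
  have had : IndepFun (fun ω => (f ω).re) (fun ω => (g ω).im) μ :=
    h.comp Complex.measurable_re Complex.measurable_im
  have hbc : IndepFun (fun ω => (f ω).im) (fun ω => (g ω).re) μ :=
    h.comp Complex.measurable_im Complex.measurable_re
  have hbd : IndepFun (fun ω => (f ω).im) (fun ω => (g ω).im) μ :=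
    h.comp Complex.measurable_im Complex.measurable_im
  have iac : Integrable (fun ω => (f ω).re * (g ω).re) μ := hac.integrable_mul ha hc
  have iad : Integrable (fun ω => (f ω).re * (g ω).im) μ := had.integrable_mul ha hd
  have ibc : Integrable (fun ω => (f ω).im * (g ω).re) μ := hbc.integrable_mul hb hc
  have ibd : Integrable (fun ω => (f ω).im * (g ω).im) μ := hbd.integrable_mul hb hd
  have i1 : Integrable (fun ω => (f ω).re * (g ω).re - (f ω).im * (g ω).im) μ := iac.sub ibd
  have i2 : Integrable (fun ω => (f ω).re * (g ω).im + (f ω).im * (g ω).re) μ := iad.add ibc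
  have e1 : ∫ ω, (f ω).re * (g ω).re ∂μ = (∫ ω, (f ω).re ∂μ) * ∫ ω, (g ω).re ∂μ :=
    hac.integral_fun_mul_eq_mul_integral ha.1 hc.1
  have e2 : ∫ ω, (f ω).re * (g ω).im ∂μ = (∫ ω, (f ω).re ∂μ) * ∫ ω, (g ω).im ∂μ :=
    had.integral_fun_mul_eq_mul_integral ha.1 hd.1
  have e3 : ∫ ω, (f ω).im * (g ω).re ∂μ = (∫ ω, (f ω).im ∂μ) * ∫ ω, (g ω).re ∂μ :=
    hbc.integral_fun_mul_eq_mul_integral hb.1 hc.1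
  have e4 : ∫ ω, (f ω).im * (g ω).im ∂μ = (∫ ω, (f ω).im ∂μ) * ∫ ω, (g ω).im ∂μ :=
    hbd.integral_fun_mul_eq_mul_integral hb.1 hd.1
  have hsplit : ∀ ω, f ω * g ω =
      (((f ω).re * (g ω).re - (f ω).im * (g ω).im : ℝ) : ℂ)
      + (((f ω).re * (g ω).im + (f ω).im * (g ω).re : ℝ) : ℂ) * I := by
    intro ω
    have := csplit (f ω).re (f ω).im (g ω).re (g ω).im
    rwa [Complex.re_add_im, Complex.re_add_im] at this
  have i1' : Integrable (fun ω => (((f ω).re * (g ω).re - (f ω).im * (g ω).im : ℝ) : ℂ)) μ := i1.ofReal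
  have i2' : Integrable (fun ω => (((f ω).re * (g ω).im + (f ω).im * (g ω).re : ℝ) : ℂ) * I) μ := i2.ofReal.mul_const I
  have i3 : Integrable (fun ω => (((f ω).re * (g ω).re - (f ω).im * (g ω).im : ℝ) : ℂ)
      + (((f ω).re * (g ω).im + (f ω).im * (g ω).re : ℝ) : ℂ) * I) μ := i1'.add i2'
  calc ∫ ω, f ω * g ω ∂μ
      = ∫ ω, ((((f ω).re * (g ω).re - (f ω).im * (g ω).im : ℝ) : ℂ)
        + (((f ω).re * (g ω).im + (f ω).im * (g ω).re : ℝ) : ℂ) * I) ∂μ :=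
        integral_congr_ae (ae_of_all _ hsplit)
    _ = ((∫ ω, ((f ω).re * (g ω).re - (f ω).im * (g ω).im) ∂μ : ℝ) : ℂ)
        + ((∫ ω, ((f ω).re * (g ω).im + (f ω).im * (g ω).re) ∂μ : ℝ) : ℂ) * I := by
        rw [integral_complex_split _ i3]
        simp
    _ = (∫ ω, f ω ∂μ) * ∫ ω, g ω ∂μ := by
        rw [integral_complex_split f hfi, integral_complex_split g hgi, csplit,
          integral_sub iac ibd, integral_add iad ibc, e1, e2, e3, e4]

private lemma indep_integral_finset_prod {n : ℕ} (Y : Fin n → Ω → ℂ)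
    (hmeas : ∀ i, Measurable (Y i)) (hint : ∀ i, Integrable (Y i) μ)
    (hind : iIndepFun Y μ) (s : Finset (Fin n)) :
    Integrable (fun ω => ∏ i ∈ s, Y i ω) μ ∧
      ∫ ω, ∏ i ∈ s, Y i ω ∂μ = ∏ i ∈ s, ∫ ω, Y i ω ∂μ := by
  classical
  induction s using Finset.induction_on with
  | empty => simp
  | @insert j s hj ih =>
    have hIF : IndepFun (∏ i ∈ s, Y i) (Y j) μ :=
      hind.indepFun_finsetProd_of_notMem hmeas hj
    have hpe : (∏ i ∈ s, Y i) = fun ω => ∏ i ∈ s, Y i ω := funext fun ω => Finset.prod_apply ω s Y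
    rw [hpe] at hIF
    have hIF' : IndepFun (Y j) (fun ω => ∏ i ∈ s, Y i ω) μ := hIF.symm
    have hmul : Integrable (fun ω => Y j ω * ∏ i ∈ s, Y i ω) μ :=
      hIF'.integrable_mul (hint j) ih.1
    have hpe2 : ∀ ω, ∏ i ∈ insert j s, Y i ω = Y j ω * ∏ i ∈ s, Y i ω :=
      fun ω => Finset.prod_insert hj
    constructor
    · exact hmul.congr (ae_of_all _ fun ω => (hpe2 ω).symm)
    · calc ∫ ω, ∏ i ∈ insert j s, Y i ω ∂μ
          = ∫ ω, Y j ω * ∏ i ∈ s, Y i ω ∂μ := integral_congr_ae (ae_of_all _ hpe2)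
        _ = (∫ ω, Y j ω ∂μ) * ∫ ω, ∏ i ∈ s, Y i ω ∂μ :=
            indep_integral_mul_complex hIF' (hint j) ih.1
        _ = ∏ i ∈ insert j s, ∫ ω, Y i ω ∂μ := by rw [ih.2, Finset.prod_insert hj]

end helpers

theorem charFun_sample_variance_representation
    {Ω : Type*} [MeasurableSpace Ω] (μ : Measure Ω) [IsProbabilityMeasure μ]
    (n : ℕ) (hn : 2 ≤ n)
    (X : Fin n → Ω → ℝ) (hXm : ∀ i, Measurable (X i))
    (hXb : ∀ i ω, X i ω ∈ Set.Icc (0:ℝ) 1)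
    (hindep : iIndepFun X μ)
    (hident : ∀ i, Measure.map (X i) μ = Measure.map (X ⟨0, by omega⟩) μ)
    (Q : Ω → ℝ) (hQ : ∀ ω, Q ω = ∑ i, (X i ω - (∑ j, X j ω) / n)^2)
    (ψ : ℝ → ℝ → ℂ)
    (hψ : ∀ t y, ψ t y =
      ∫ ω, Complex.exp (-((y:ℂ) + (-(I * t)) ^ ((1:ℂ)/2) * (X ⟨0, by omega⟩ ω : ℂ))^2) ∂μ) :
    ∀ t : ℝ, ∫ ω, Complex.exp (I * t * (Q ω : ℂ)) ∂μ =
      (Real.sqrt (n / Real.pi) : ℂ) * ∫ y : ℝ, (ψ t y)^n := by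
  intro t
  classical
  set a : ℂ := (-(I * t)) ^ ((1:ℂ)/2) with ha_def
  have ha2 : a ^ 2 = -(I * t) := by
    rw [ha_def, one_div]
    exact Complex.cpow_ofNat_inv_pow _ 2
  set g : ℝ → ℝ → ℂ := fun y x => Complex.exp (-((y:ℂ) + a * x)^2) with hg_def
  have hg_meas : ∀ y, Measurable (g y) := by
    intro y
    apply Complex.measurable_exp.comp
    fun_prop
  -- norm formula and bounds
  have hnorm : ∀ (y x : ℝ), ‖g y x‖ = Real.exp ((a.im*x)^2 - (y + a.re*x)^2) := by
    intro y x
    rw [hg_def]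
    simp only [Complex.norm_exp]
    congr 1
    simp [pow_two, Complex.mul_re, Complex.mul_im, Complex.add_re, Complex.add_im]
  have hbound1 : ∀ (y x : ℝ), x ∈ Set.Icc (0:ℝ) 1 →
      ‖g y x‖ ≤ Real.exp (a.re^2 + a.im^2 - y^2/2) := by
    intro y x hx
    rw [hnorm]
    apply Real.exp_le_exp.mpr
    obtain ⟨h0, h1⟩ := hx
    have hx2 : x^2 ≤ 1 := by nlinarith
    have him : (a.im*x)^2 ≤ a.im^2 := by nlinarith [sq_nonneg a.im]
    have hre : (a.re*x)^2 ≤ a.re^2 := by nlinarith [sq_nonneg a.re]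
    nlinarith [sq_nonneg (y + 2*(a.re*x))]
  have hboundC : ∀ (y x : ℝ), x ∈ Set.Icc (0:ℝ) 1 →
      ‖g y x‖ ≤ Real.exp (a.re^2 + a.im^2) := by
    intro y x hx
    refine (hbound1 y x hx).trans (Real.exp_le_exp.mpr ?_)
    nlinarith [sq_nonneg y]
  have hgXi_int : ∀ (y : ℝ) i, Integrable (fun ω => g y (X i ω)) μ := by
    intro y i
    refine Integrable.mono' (integrable_const (Real.exp (a.re^2 + a.im^2)))
      (((hg_meas y).comp (hXm i)).aestronglyMeasurable) ?_
    exact ae_of_all _ fun ω => hboundC y _ (hXb i ω)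
  -- pointwise Gaussian identity
  have key : ∀ ω, ∫ y : ℝ, ∏ i, g y (X i ω) =
      ((Real.pi : ℂ)/n) ^ ((1:ℂ)/2) * Complex.exp (I * t * (Q ω : ℂ)) := by
    intro ω
    have hnpos : 0 < n := by omega
    have hn0 : (n:ℝ) ≠ 0 := by exact_mod_cast hnpos.ne'
    have hs : ((∑ i, X i ω : ℝ) : ℂ) = ∑ i, ((X i ω : ℝ) : ℂ) := by push_cast; rfl
    have hs2 : ((∑ i, (X i ω)^2 : ℝ) : ℂ) = ∑ i, ((X i ω : ℝ) : ℂ)^2 := by push_cast; rfl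
    have hQre : Q ω = (∑ i, (X i ω)^2) - (∑ i, X i ω)^2/n := by
      rw [hQ ω]
      calc ∑ i, (X i ω - (∑ j, X j ω)/n)^2
          = ∑ i, ((X i ω)^2 - (2*((∑ j, X j ω)/n))*(X i ω) + ((∑ j, X j ω)/n)^2) :=
            Finset.sum_congr rfl fun i _ => by ring
        _ = (∑ i, (X i ω)^2) - (2*((∑ j, X j ω)/n))*(∑ i, X i ω) + n*(((∑ j, X j ω)/n)^2) := by
            rw [Finset.sum_add_distrib, Finset.sum_sub_distrib, ← Finset.mul_sum,
              Finset.sum_const, Finset.card_univ, Fintype.card_fin, nsmul_eq_mul]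
        _ = (∑ i, (X i ω)^2) - (∑ i, X i ω)^2/n := by field_simp; ring
    have hQC : (Q ω : ℂ) = ((∑ i, (X i ω)^2 : ℝ) : ℂ) - ((∑ i, X i ω : ℝ) : ℂ)^2/(n:ℂ) := by
      rw [hQre]; push_cast; ring
    have hexp : ∀ y : ℝ, ∏ i, g y (X i ω) =
        Complex.exp ((-(n:ℂ)) * (y:ℂ)^2 + (-(2*a*((∑ i, X i ω : ℝ) : ℂ))) * (y:ℂ)
          + (-(a^2) * ((∑ i, (X i ω)^2 : ℝ) : ℂ))) := by
      intro y
      rw [hg_def, ← Complex.exp_sum]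
      congr 1
      rw [Finset.sum_congr rfl (fun i _ => (by ring :
        -(((y:ℝ):ℂ) + a * ((X i ω : ℝ):ℂ))^2 =
          -((y:ℂ)^2) + (-(2*a*(y:ℂ))) * ((X i ω : ℝ):ℂ) + (-(a^2)) * ((X i ω : ℝ):ℂ)^2))]
      rw [Finset.sum_add_distrib, Finset.sum_add_distrib, ← Finset.mul_sum, ← Finset.mul_sum,
        ← hs, ← hs2, Finset.sum_const, Finset.card_univ, Fintype.card_fin, nsmul_eq_mul]
      push_cast
      ring
    have hbre : ((-(n:ℂ)).re) < 0 := by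
      have : (0:ℝ) < n := by exact_mod_cast hnpos
      simpa using this
    calc ∫ y : ℝ, ∏ i, g y (X i ω)
        = ∫ y : ℝ, Complex.exp ((-(n:ℂ)) * (y:ℂ)^2 + (-(2*a*((∑ i, X i ω : ℝ) : ℂ))) * (y:ℂ)
            + (-(a^2) * ((∑ i, (X i ω)^2 : ℝ) : ℂ))) := by
          exact integral_congr_ae (ae_of_all _ hexp)
      _ = ((Real.pi : ℂ) / -(-(n:ℂ))) ^ ((1:ℂ)/2) *
            Complex.exp ((-(a^2) * ((∑ i, (X i ω)^2 : ℝ) : ℂ)) -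
              (-(2*a*((∑ i, X i ω : ℝ) : ℂ)))^2 / (4 * (-(n:ℂ)))) := by
          rw [integral_cexp_quadratic hbre]
      _ = ((Real.pi : ℂ)/n) ^ ((1:ℂ)/2) * Complex.exp (I * t * (Q ω : ℂ)) := by
          rw [neg_neg]
          congr 1
          have h4 : (-(2*a*((∑ i, X i ω : ℝ) : ℂ)))^2 = 4 * (a^2) * ((∑ i, X i ω : ℝ) : ℂ)^2 := by
            ring
          rw [h4, ha2, hQC]
          have hnC : (n:ℂ) ≠ 0 := by exact_mod_cast hn0
          field_simp
  -- Fubini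
  have hF_meas : Measurable (fun p : Ω × ℝ => ∏ i, g p.2 (X i p.1)) := by
    apply Finset.measurable_prod
    intro i _
    rw [hg_def]
    apply Complex.measurable_exp.comp
    fun_prop
  have hF_int : Integrable (fun p : Ω × ℝ => ∏ i, g p.2 (X i p.1)) (μ.prod volume) := by
    refine Integrable.mono'
      (g := fun p : Ω × ℝ => Real.exp ((n:ℝ)*(a.re^2+a.im^2)) * Real.exp (-(1/2:ℝ)*p.2^2))
      ?_ hF_meas.aestronglyMeasurable ?_
    · exact (integrable_const (μ := μ) (Real.exp ((n:ℝ)*(a.re^2+a.im^2)))).mul_prod (integrable_exp_neg_mul_sq (b := (1/2:ℝ)) (by norm_num))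
    · refine ae_of_all _ fun p => ?_
      calc ‖∏ i, g p.2 (X i p.1)‖ = ∏ i, ‖g p.2 (X i p.1)‖ := by rw [norm_prod]
        _ ≤ ∏ _i : Fin n, Real.exp (a.re^2 + a.im^2 - p.2^2/2) :=
            Finset.prod_le_prod (fun i _ => norm_nonneg _)
              (fun i _ => hbound1 p.2 _ (hXb i p.1))
        _ = Real.exp (a.re^2 + a.im^2 - p.2^2/2) ^ n := by
            rw [Finset.prod_const, Finset.card_univ, Fintype.card_fin]
        _ = Real.exp ((n:ℝ) * (a.re^2 + a.im^2 - p.2^2/2)) := by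
            rw [Real.exp_nat_mul]
        _ ≤ Real.exp ((n:ℝ)*(a.re^2+a.im^2)) * Real.exp (-(1/2:ℝ)*p.2^2) := by
            rw [← Real.exp_add]
            apply Real.exp_le_exp.mpr
            have h1n : (1:ℝ) ≤ n := by exact_mod_cast Nat.one_le_of_lt hn
            nlinarith [sq_nonneg p.2]
  have swap : ∫ ω, (∫ y : ℝ, ∏ i, g y (X i ω)) ∂μ = ∫ y : ℝ, ∫ ω, ∏ i, g y (X i ω) ∂μ :=
    integral_integral_swap hF_int
  -- independence and identical distribution
  have hYind : ∀ y : ℝ, iIndepFun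
      (fun i => fun ω => g y (X i ω)) μ :=
    fun y => hindep.comp (fun _ => g y) (fun _ => hg_meas y)
  have hprod : ∀ y : ℝ, ∫ ω, ∏ i, g y (X i ω) ∂μ = ∏ i : Fin n, ∫ ω, g y (X i ω) ∂μ :=
    fun y => (indep_integral_finset_prod (fun i ω => g y (X i ω))
      (fun i => (hg_meas y).comp (hXm i)) (fun i => hgXi_int y i) (hYind y) Finset.univ).2
  have hsame : ∀ (y : ℝ) i, ∫ ω, g y (X i ω) ∂μ = ψ t y := by
    intro y i
    rw [hψ t y]
    rw [← integral_map (hXm i).aemeasurable ((hg_meas y).aestronglyMeasurable), hident i,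
      integral_map (hXm _).aemeasurable ((hg_meas y).aestronglyMeasurable)]
  have hmain : ∫ y : ℝ, (ψ t y)^n =
      ((Real.pi : ℂ)/n) ^ ((1:ℂ)/2) * ∫ ω, Complex.exp (I * t * (Q ω : ℂ)) ∂μ := by
    calc ∫ y : ℝ, (ψ t y)^n
        = ∫ y : ℝ, ∫ ω, ∏ i, g y (X i ω) ∂μ := by
          refine integral_congr_ae (ae_of_all _ fun y => ?_)
          show (ψ t y)^n = ∫ ω, ∏ i, g y (X i ω) ∂μ
          rw [hprod y, Finset.prod_congr rfl (fun i _ => hsame y i), Finset.prod_const,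
            Finset.card_univ, Fintype.card_fin]
      _ = ∫ ω, (∫ y : ℝ, ∏ i, g y (X i ω)) ∂μ := swap.symm
      _ = ∫ ω, ((Real.pi : ℂ)/n) ^ ((1:ℂ)/2) * Complex.exp (I * t * (Q ω : ℂ)) ∂μ :=
          integral_congr_ae (ae_of_all _ fun ω => key ω)
      _ = ((Real.pi : ℂ)/n) ^ ((1:ℂ)/2) * ∫ ω, Complex.exp (I * t * (Q ω : ℂ)) ∂μ :=
          integral_const_mul _ _
  have hC : (Real.sqrt (n / Real.pi) : ℂ) * ((Real.pi : ℂ)/n) ^ ((1:ℂ)/2) = 1 := by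
    have hπ : (0:ℝ) < Real.pi := Real.pi_pos
    have hn0 : (0:ℝ) < n := by positivity
    have h1 : ((Real.pi : ℂ)/(n:ℂ)) = ((Real.pi / n : ℝ) : ℂ) := by push_cast; ring
    have h2 : ((1:ℂ)/2) = ((1/2 : ℝ) : ℂ) := by norm_num
    rw [h1, h2, ← Complex.ofReal_cpow (by positivity)]
    rw [← Real.sqrt_eq_rpow]
    rw [← Complex.ofReal_mul]
    rw [← Real.sqrt_mul (by positivity)]
    rw [show (n / Real.pi) * (Real.pi / n) = 1 by field_simp]
    simp
  calc ∫ ω, Complex.exp (I * t * (Q ω : ℂ)) ∂μ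
      = ((Real.sqrt (n / Real.pi) : ℂ) * ((Real.pi : ℂ)/n) ^ ((1:ℂ)/2)) *
          ∫ ω, Complex.exp (I * t * (Q ω : ℂ)) ∂μ := by rw [hC, one_mul]
    _ = (Real.sqrt (n / Real.pi) : ℂ) *
          (((Real.pi : ℂ)/n) ^ ((1:ℂ)/2) * ∫ ω, Complex.exp (I * t * (Q ω : ℂ)) ∂μ) := by ring
    _ = (Real.sqrt (n / Real.pi) : ℂ) * ∫ y : ℝ, (ψ t y)^n := by rw [← hmain]
end

section
/- For p ∈ (0,1), n ≥ 2 with np < n-1, the constant ∫₁^{1/ε - 1} (1+t)^{(p-1)(n-1)} t^{p-1} dt is bounded above by ∫₁^∞ t^{(p-1)n} dt = 1/((1-p)n - 1); more generally, with ε ∈ (0,1/2), P{R ≤ ε} = O(ε^{min(np, n-1)}) as ε → 0 if np ≠ n-1, and O(ε^{n-1} ln(1/ε)) if np = n-1, where R is the range of an i.i.d. sample of size n from the density f_p(x) = p x^{p-1} on (0,1]. -/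
open MeasureTheory ProbabilityTheory Filter Real Asymptotics


lemma part1 (p : ℝ) (hp : 0 < p) (hp1 : p < 1) (n : ℕ) (hn : 2 ≤ n)
    (h : (n : ℝ) * p < (n : ℝ) - 1) (ε : ℝ) (hε : ε ∈ Set.Ioo (0:ℝ) (1/2)) :
    (∫ t in Set.Icc (1:ℝ) (1/ε - 1), (1 + t) ^ ((p - 1) * ((n:ℝ) - 1)) * t ^ (p - 1))
      ≤ 1 / ((1 - p) * n - 1) := by
  obtain ⟨hε0, hε2⟩ := hε
  have hb : (2:ℝ) < 1/ε := by
    rw [lt_div_iff₀ hε0]; linarith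
  set b := 1/ε - 1 with hbdef
  have h1b : (1:ℝ) ≤ b := by simp only [hbdef]; linarith
  have hq : (p - 1) * (n:ℝ) < -1 := by nlinarith
  have hden : 0 < (1 - p) * n - 1 := by nlinarith
  -- integrand bounds
  have hcont1 : ContinuousOn (fun t : ℝ => (1 + t) ^ ((p - 1) * ((n:ℝ) - 1)) * t ^ (p - 1))
      (Set.Icc 1 b) := by
    apply ContinuousOn.mul
    · apply ContinuousOn.rpow_const (by fun_prop)
      intro x hx
      exact Or.inl (by simp only [Set.mem_Icc] at hx; nlinarith [hx.1])
    · apply ContinuousOn.rpow_const (by fun_prop)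
      intro x hx
      exact Or.inl (by simp only [Set.mem_Icc] at hx; nlinarith [hx.1])
  have hcont2 : ContinuousOn (fun t : ℝ => t ^ ((p - 1) * (n:ℝ))) (Set.Icc 1 b) := by
    apply ContinuousOn.rpow_const (by fun_prop)
    intro x hx
    exact Or.inl (by simp only [Set.mem_Icc] at hx; nlinarith [hx.1])
  have hmono : ∀ t ∈ Set.Icc (1:ℝ) b,
      (1 + t) ^ ((p - 1) * ((n:ℝ) - 1)) * t ^ (p - 1) ≤ t ^ ((p - 1) * (n:ℝ)) := by
    intro t ht
    simp only [Set.mem_Icc] at ht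
    have ht0 : (0:ℝ) < t := by linarith [ht.1]
    have h1 : (1 + t) ^ ((p - 1) * ((n:ℝ) - 1)) ≤ t ^ ((p - 1) * ((n:ℝ) - 1)) := by
      apply Real.rpow_le_rpow_of_nonpos ht0 (by linarith)
      have : (1:ℝ) ≤ (n:ℝ) - 1 := by
        have : (2:ℝ) ≤ (n:ℝ) := by exact_mod_cast hn
        linarith
      nlinarith
    calc (1 + t) ^ ((p - 1) * ((n:ℝ) - 1)) * t ^ (p - 1)
        ≤ t ^ ((p - 1) * ((n:ℝ) - 1)) * t ^ (p - 1) := by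
          apply mul_le_mul_of_nonneg_right h1 (Real.rpow_nonneg ht0.le _)
      _ = t ^ ((p - 1) * (n:ℝ)) := by
          rw [← Real.rpow_add ht0]; ring_nf
  have hint : (∫ t in Set.Icc (1:ℝ) b, (1 + t) ^ ((p - 1) * ((n:ℝ) - 1)) * t ^ (p - 1))
      ≤ ∫ t in Set.Icc (1:ℝ) b, t ^ ((p - 1) * (n:ℝ)) := by
    apply setIntegral_mono_on (hcont1.integrableOn_Icc) (hcont2.integrableOn_Icc)
      measurableSet_Icc hmono
  refine hint.trans ?_
  rw [integral_Icc_eq_integral_Ioc, ← intervalIntegral.integral_of_le h1b,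
    integral_rpow (Or.inr ⟨by linarith, by
      rw [Set.uIcc_of_le h1b]
      simp only [Set.mem_Icc]
      intro hcon
      linarith [hcon.1]⟩)]
  have hexp : (p - 1) * (n:ℝ) + 1 < 0 := by linarith
  have hbp : (0:ℝ) ≤ b ^ ((p - 1) * (n:ℝ) + 1) := Real.rpow_nonneg (by linarith) _
  have h1p : (1:ℝ) ^ ((p - 1) * (n:ℝ) + 1) = 1 := Real.one_rpow _
  rw [h1p]
  have hEq : (b ^ ((p - 1) * (n:ℝ) + 1) - 1) / ((p - 1) * (n:ℝ) + 1)
      = (1 - b ^ ((p - 1) * (n:ℝ) + 1)) / ((1 - p) * (n:ℝ) - 1) := by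
    rw [div_eq_div_iff (by linarith) (by linarith)]
    ring
  rw [hEq]
  gcongr
  linarith


-- a_k ≤ 2p k^{p-1} for k ≥ 1
lemma ak_le (p : ℝ) (hp : 0 < p) (hp1 : p < 1) (k : ℝ) (hk : 1 ≤ k) :
    (k + 2) ^ p - k ^ p ≤ 2 * p * k ^ (p - 1) := by
  have hk0 : (0:ℝ) < k := by linarith
  have h1 : (k + 2) ^ p = k ^ p * (1 + 2/k) ^ p := by
    rw [← Real.mul_rpow hk0.le (by positivity)]
    congr 1
    field_simp
  have h2 : (1 + 2/k) ^ p ≤ 1 + p * (2/k) := by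
    have hnn : (0:ℝ) ≤ 2/k := by positivity
    have := rpow_one_add_le_one_add_mul_self (s := 2/k) (by linarith) hp.le hp1.le
    simpa using this
  have h3 : k ^ p * (2/k) = 2 * k ^ (p - 1) := by
    rw [Real.rpow_sub hk0, Real.rpow_one]
    field_simp
  calc (k + 2) ^ p - k ^ p = k ^ p * (1 + 2/k) ^ p - k ^ p := by rw [h1]
    _ ≤ k ^ p * (1 + p * (2/k)) - k ^ p := by
        have := Real.rpow_nonneg hk0.le p
        nlinarith
    _ = p * (k ^ p * (2/k)) := by ring
    _ = 2 * p * k ^ (p - 1) := by rw [h3]; ring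

-- case q < -1
lemma sumA (q : ℝ) (hq : q < -1) (K : ℕ) :
    ∑ j ∈ Finset.range K, ((j:ℝ) + 1) ^ q ≤ ∑' j : ℕ, ((j:ℝ) + 1) ^ q := by
  have hs : Summable (fun j : ℕ => ((j:ℝ) + 1) ^ q) := by
    have := (Real.summable_nat_rpow (p := q)).2 hq
    have h2 := (summable_nat_add_iff (f := fun n : ℕ => (n:ℝ) ^ q) 1).2 this
    simpa [add_comm] using h2
  exact Summable.sum_le_tsum _ (fun i _ => Real.rpow_nonneg (by positivity) _) hs

-- case -1 < q < 0
lemma sumB (q : ℝ) (hq : -1 < q) (hq0 : q < 0) (K : ℕ) :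
    ∑ j ∈ Finset.range K, ((j:ℝ) + 1) ^ q ≤ (K:ℝ) ^ (q + 1) / (q + 1) := by
  have hq1 : 0 < q + 1 := by linarith
  induction K with
  | zero => simp [Real.zero_rpow hq1.ne']
  | succ K ih =>
    rw [Finset.sum_range_succ]
    have key : (q + 1) * ((K:ℝ) + 1) ^ q + (K:ℝ) ^ (q + 1) ≤ ((K:ℝ) + 1) ^ (q + 1) := by
      have hK1 : (0:ℝ) < (K:ℝ) + 1 := by positivity
      have hbern : (1 + (-(1:ℝ)/((K:ℝ)+1))) ^ (q+1) ≤ 1 + (q+1) * (-(1:ℝ)/((K:ℝ)+1)) :=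
        rpow_one_add_le_one_add_mul_self (by
          have h1 : (1:ℝ)/((K:ℝ)+1) ≤ 1 := by
            rw [div_le_one hK1]; linarith
          rw [neg_div]; linarith) hq1.le (by linarith)
      have hsimp : (1 + (-(1:ℝ)/((K:ℝ)+1))) = (K:ℝ)/((K:ℝ)+1) := by field_simp; ring
      rw [hsimp] at hbern
      have hKr : ((K:ℝ)/((K:ℝ)+1)) ^ (q+1) = (K:ℝ) ^ (q+1) / ((K:ℝ)+1) ^ (q+1) :=
        Real.div_rpow (K.cast_nonneg) hK1.le (q+1)
      rw [hKr] at hbern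
      have hpow : (0:ℝ) < ((K:ℝ)+1) ^ (q+1) := Real.rpow_pos_of_pos hK1 _
      have hmul := mul_le_mul_of_nonneg_right hbern hpow.le
      rw [div_mul_cancel₀ _ hpow.ne'] at hmul
      have hq' : ((K:ℝ)+1) ^ (q+1) / ((K:ℝ)+1) = ((K:ℝ)+1) ^ q := by
        rw [Real.rpow_add hK1, Real.rpow_one]
        field_simp
      have hexpand : (1 + (q+1) * (-(1:ℝ)/((K:ℝ)+1))) * ((K:ℝ)+1) ^ (q+1)
          = ((K:ℝ)+1) ^ (q+1) - (q+1) * (((K:ℝ)+1) ^ (q+1) / ((K:ℝ)+1)) := by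
        ring
      rw [hexpand, hq'] at hmul
      linarith
    have h2 : ((q+1)*(((K:ℝ)+1) ^ q) + (K:ℝ)^(q+1))/(q+1) ≤ ((K:ℝ)+1)^(q+1)/(q+1) := by
      gcongr
    rw [add_div, mul_div_cancel_left₀ _ hq1.ne'] at h2
    push_cast
    linarith

-- case q = -1
lemma sumC (K : ℕ) (hK : 1 ≤ K) :
    ∑ j ∈ Finset.range K, ((j:ℝ) + 1) ^ (-1:ℝ) ≤ 1 + Real.log K := by
  induction K with
  | zero => omega
  | succ K ih =>
    rcases Nat.eq_zero_or_pos K with h0 | hK1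
    · subst h0
      simp [Real.rpow_neg_one]
    · 
      rw [Finset.sum_range_succ]
      have hstep : ((K:ℝ) + 1) ^ (-1:ℝ) ≤ Real.log ((K:ℝ)+1) - Real.log K := by
        have hKpos : (0:ℝ) < K := by exact_mod_cast hK1
        have h1 : Real.log ((K:ℝ)/((K:ℝ)+1)) ≤ (K:ℝ)/((K:ℝ)+1) - 1 :=
          Real.log_le_sub_one_of_pos (by positivity)
        rw [Real.log_div hKpos.ne' (by positivity)] at h1
        have h2 : (K:ℝ)/((K:ℝ)+1) - 1 = -(1/((K:ℝ)+1)) := by field_simp; ring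
        rw [Real.rpow_neg_one]
        rw [h2] at h1
        have : (1:ℝ)/((K:ℝ)+1) ≤ Real.log ((K:ℝ)+1) - Real.log K := by linarith
        simpa [one_div] using this
      have := ih hK1
      push_cast
      push_cast at this hstep
      linarith


lemma nu_compl_zero (p : ℝ) :
    ((volume.restrict (Set.Ioc (0:ℝ) 1)).withDensity
      (fun x => ENNReal.ofReal (p * x ^ (p - 1)))) (Set.Ioc (0:ℝ) 1)ᶜ = 0 := by
  rw [withDensity_apply _ measurableSet_Ioc.compl,
    Measure.restrict_restrict measurableSet_Ioc.compl, Set.compl_inter_self,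
    Measure.restrict_empty, lintegral_zero_measure]

lemma nu_Icc_le (p : ℝ) (hp : 0 < p) (hp1 : p < 1) (a b : ℝ) (ha : 0 ≤ a) (hab : a ≤ b) :
    ((volume.restrict (Set.Ioc (0:ℝ) 1)).withDensity
      (fun x => ENNReal.ofReal (p * x ^ (p - 1)))) (Set.Icc a b)
      ≤ ENNReal.ofReal (b ^ p - a ^ p) := by
  rw [withDensity_apply _ measurableSet_Icc, Measure.restrict_restrict measurableSet_Icc]
  set b' := min b 1 with hb'
  have hsub : Set.Icc a b ∩ Set.Ioc 0 1 ⊆ {a} ∪ Set.Ioc a b' := by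
    rintro x ⟨⟨hax, hxb⟩, h0x, hx1⟩
    rcases eq_or_lt_of_le hax with h | h
    · exact Or.inl (by simp [h.symm])
    · exact Or.inr ⟨h, le_min hxb hx1⟩
  have hrw : ∫⁻ x in Set.Icc a b ∩ Set.Ioc 0 1, ENNReal.ofReal (p * x ^ (p - 1))
      ≤ ∫⁻ x in {a} ∪ Set.Ioc a b', ENNReal.ofReal (p * x ^ (p - 1)) :=
    lintegral_mono_set hsub
  refine hrw.trans ?_
  refine (lintegral_union_le _ _ _).trans ?_
  have hsngl : ∫⁻ x in ({a} : Set ℝ), ENNReal.ofReal (p * x ^ (p - 1)) = 0 := by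
    rw [Measure.restrict_singleton, Real.volume_singleton]
    simp
  rw [hsngl, zero_add]
  by_cases hab' : a ≤ b'
  · have hI : IntegrableOn (fun x : ℝ => p * x ^ (p - 1)) (Set.Ioc a b') volume := by
      rw [← intervalIntegrable_iff_integrableOn_Ioc_of_le hab']
      exact (intervalIntegral.intervalIntegrable_rpow' (by linarith)).const_mul p
    rw [← ofReal_integral_eq_lintegral_ofReal hI]
    · rw [← intervalIntegral.integral_of_le hab', intervalIntegral.integral_const_mul,
        integral_rpow (Or.inl (by linarith))]
      apply ENNReal.ofReal_le_ofReal
      have hb'b : b' ≤ b := min_le_left _ _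
      have hb'0 : 0 ≤ b' := le_trans ha hab'
      have : b' ^ p ≤ b ^ p := Real.rpow_le_rpow hb'0 hb'b hp.le
      have hpe : p - 1 + 1 = p := by ring
      rw [hpe, mul_comm, div_mul_cancel₀ _ hp.ne']
      linarith
    · filter_upwards [ae_restrict_mem measurableSet_Ioc] with x hx
      exact mul_nonneg hp.le (Real.rpow_nonneg (le_trans ha hx.1.le) _)
  · rw [Set.Ioc_eq_empty (by intro h; exact hab' h.le), Measure.restrict_empty,
      lintegral_zero_measure]
    exact zero_le

section
variable {Ω : Type*} [MeasurableSpace Ω] (μ : Measure Ω) [IsProbabilityMeasure μ]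

lemma prod_meas (p : ℝ) (n : ℕ) (X : Fin n → Ω → ℝ) (hXm : ∀ i, Measurable (X i))
    (hindep : iIndepFun X μ)
    (hlaw : ∀ i, Measure.map (X i) μ =
      (volume.restrict (Set.Ioc (0:ℝ) 1)).withDensity
        (fun x => ENNReal.ofReal (p * x ^ (p - 1))))
    (S : Set ℝ) (hS : MeasurableSet S) :
    μ (⋂ i, X i ⁻¹' S) =
      (((volume.restrict (Set.Ioc (0:ℝ) 1)).withDensity
        (fun x => ENNReal.ofReal (p * x ^ (p - 1)))) S) ^ n := by
  have h1 : μ (⋂ i, X i ⁻¹' S) = μ (⋂ i ∈ Finset.univ, X i ⁻¹' S) := by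
    congr 1
    simp
  rw [h1, hindep.measure_inter_preimage_eq_mul Finset.univ (sets := fun _ => S)
    (fun i _ => hS)]
  have h2 : ∀ i, μ (X i ⁻¹' S) =
      ((volume.restrict (Set.Ioc (0:ℝ) 1)).withDensity
        (fun x => ENNReal.ofReal (p * x ^ (p - 1)))) S := by
    intro i
    rw [← hlaw i, Measure.map_apply (hXm i) hS]
  simp_rw [h2]
  rw [Finset.prod_const, Finset.card_univ, Fintype.card_fin]

end

section
variable {Ω : Type*} [MeasurableSpace Ω] (μ : Measure Ω) [IsProbabilityMeasure μ]

lemma key_bound (p : ℝ) (hp : 0 < p) (hp1 : p < 1) (n : ℕ) (hn : 2 ≤ n)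
    (hne : (Finset.univ : Finset (Fin n)).Nonempty)
    (X : Fin n → Ω → ℝ) (hXm : ∀ i, Measurable (X i))
    (hindep : iIndepFun X μ)
    (hlaw : ∀ i, Measure.map (X i) μ =
      (volume.restrict (Set.Ioc (0:ℝ) 1)).withDensity
        (fun x => ENNReal.ofReal (p * x ^ (p - 1))))
    (R : Ω → ℝ) (hR : ∀ ω, R ω = Finset.univ.sup' hne (fun i => X i ω)
      - Finset.univ.inf' hne (fun i => X i ω))
    (ε : ℝ) (hε0 : 0 < ε) (hε2 : ε < 1/2) :
    (μ {ω | R ω ≤ ε}).toReal ≤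
      ∑ k ∈ Finset.range (⌊1/ε⌋₊ + 1), ((((k:ℝ)+2)^p - (k:ℝ)^p) * ε^p)^n := by
  set ν := (volume.restrict (Set.Ioc (0:ℝ) 1)).withDensity
      (fun x => ENNReal.ofReal (p * x ^ (p - 1))) with hν
  set K := ⌊1/ε⌋₊ with hK
  -- the bad set
  set N := ⋃ i, X i ⁻¹' (Set.Ioc (0:ℝ) 1)ᶜ with hN
  have hNzero : μ N = 0 := by
    apply measure_iUnion_null
    intro i
    rw [← Measure.map_apply (hXm i) measurableSet_Ioc.compl, hlaw i]
    exact nu_compl_zero p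
  -- inclusion
  have hincl : {ω | R ω ≤ ε} ∩ Nᶜ ⊆
      ⋃ k ∈ Finset.range (K+1), ⋂ i, X i ⁻¹' Set.Icc ((k:ℝ)*ε) (((k:ℝ)+2)*ε) := by
    rintro ω ⟨hRω, hNω⟩
    simp only [hN, Set.compl_iUnion, Set.mem_iInter, Set.mem_preimage, Set.mem_compl_iff,
      not_not] at hNω
    have hX : ∀ i, X i ω ∈ Set.Ioc (0:ℝ) 1 := fun i => hNω i
    set m := Finset.univ.inf' hne (fun i => X i ω) with hm
    obtain ⟨i₀, hi₀⟩ := Finset.exists_mem_eq_inf' hne (fun i => X i ω)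
    have hm0 : 0 < m := by rw [hm, hi₀.2]; exact (hX i₀).1
    have hm1 : m ≤ 1 := by rw [hm, hi₀.2]; exact (hX i₀).2
    set k := ⌊m/ε⌋₊ with hk
    have hkK : k ≤ K := by
      apply Nat.floor_mono
      gcongr
    simp only [Set.mem_iUnion, Finset.mem_range]
    refine ⟨k, by omega, ?_⟩
    simp only [Set.mem_iInter, Set.mem_preimage, Set.mem_Icc]
    intro i
    have hlow : (k:ℝ)*ε ≤ m := by
      have h1 : (k:ℝ) ≤ m/ε := Nat.floor_le (by positivity)
      calc (k:ℝ)*ε ≤ (m/ε)*ε := by gcongr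
        _ = m := by field_simp
    have hhigh : m < ((k:ℝ)+1)*ε := by
      have h1 : m/ε < (k:ℝ)+1 := Nat.lt_floor_add_one _
      calc m = (m/ε)*ε := by field_simp
        _ < ((k:ℝ)+1)*ε := by gcongr
    have hmle : m ≤ X i ω := by
      rw [hm]; exact Finset.inf'_le _ (Finset.mem_univ i)
    have hsup : X i ω ≤ Finset.univ.sup' hne (fun j => X j ω) :=
      Finset.le_sup' (fun j => X j ω) (Finset.mem_univ i)
    have hRε : Finset.univ.sup' hne (fun j => X j ω) ≤ m + ε := by
      have := hR ω
      rw [Set.mem_setOf_eq] at hRω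
      rw [this] at hRω
      linarith
    constructor
    · linarith
    · have : X i ω ≤ m + ε := le_trans hsup hRε
      nlinarith
  -- measure bound in ENNReal
  have hmb : μ {ω | R ω ≤ ε} ≤
      ∑ k ∈ Finset.range (K+1), (ENNReal.ofReal ((((k:ℝ)+2)^p - (k:ℝ)^p) * ε^p))^n := by
    have hsplit : {ω | R ω ≤ ε} ⊆ ({ω | R ω ≤ ε} ∩ Nᶜ) ∪ ({ω | R ω ≤ ε} ∩ N) := by
      intro ω hω
      by_cases h : ω ∈ N
      · exact Set.mem_union_right _ ⟨hω, h⟩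
      · exact Set.mem_union_left _ ⟨hω, h⟩
    calc μ {ω | R ω ≤ ε} ≤ μ ({ω | R ω ≤ ε} ∩ Nᶜ) + μ ({ω | R ω ≤ ε} ∩ N) :=
          le_trans (measure_mono hsplit) (measure_union_le _ _)
      _ ≤ μ ({ω | R ω ≤ ε} ∩ Nᶜ) + 0 := by
          gcongr
          exact le_trans (measure_mono (Set.inter_subset_right)) hNzero.le
      _ = μ ({ω | R ω ≤ ε} ∩ Nᶜ) := by rw [add_zero]
      _ ≤ μ (⋃ k ∈ Finset.range (K+1), ⋂ i, X i ⁻¹' Set.Icc ((k:ℝ)*ε) (((k:ℝ)+2)*ε)) :=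
          measure_mono hincl
      _ ≤ ∑ k ∈ Finset.range (K+1), μ (⋂ i, X i ⁻¹' Set.Icc ((k:ℝ)*ε) (((k:ℝ)+2)*ε)) :=
          measure_biUnion_finset_le _ _
      _ ≤ ∑ k ∈ Finset.range (K+1), (ENNReal.ofReal ((((k:ℝ)+2)^p - (k:ℝ)^p) * ε^p))^n := by
          apply Finset.sum_le_sum
          intro k _
          rw [prod_meas μ p n X hXm hindep hlaw _ measurableSet_Icc]
          apply pow_le_pow_left' 
          have h1 : ν (Set.Icc ((k:ℝ)*ε) (((k:ℝ)+2)*ε)) ≤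
              ENNReal.ofReal ((((k:ℝ)+2)*ε)^p - ((k:ℝ)*ε)^p) :=
            nu_Icc_le p hp hp1 _ _ (by positivity) (by nlinarith)
          refine h1.trans (le_of_eq ?_)
          congr 1
          rw [Real.mul_rpow (by positivity) hε0.le, Real.mul_rpow (by positivity) hε0.le]
          ring
  -- to real
  have hfin : ∀ k ∈ Finset.range (K+1),
      (ENNReal.ofReal ((((k:ℝ)+2)^p - (k:ℝ)^p) * ε^p))^n ≠ ⊤ := by
    intro k _
    exact (ENNReal.pow_ne_top ENNReal.ofReal_ne_top)
  have hsumfin : (∑ k ∈ Finset.range (K+1),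
      (ENNReal.ofReal ((((k:ℝ)+2)^p - (k:ℝ)^p) * ε^p))^n) ≠ ⊤ :=
    (ENNReal.sum_lt_top.mpr (fun k hk => (hfin k hk).lt_top)).ne
  have := ENNReal.toReal_mono hsumfin hmb
  refine this.trans ?_
  rw [ENNReal.toReal_sum hfin]
  apply Finset.sum_le_sum
  intro k _
  have hnn : 0 ≤ (((k:ℝ)+2)^p - (k:ℝ)^p) * ε^p := by
    have : (k:ℝ)^p ≤ ((k:ℝ)+2)^p := Real.rpow_le_rpow (k.cast_nonneg) (by linarith) hp.le
    have : (0:ℝ) ≤ ε^p := Real.rpow_nonneg hε0.le _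
    nlinarith
  rw [ENNReal.toReal_pow, ENNReal.toReal_ofReal hnn]

end

lemma Tbound (p : ℝ) (hp : 0 < p) (hp1 : p < 1) (n : ℕ)
    (ε : ℝ) (hε0 : 0 < ε) :
    ∑ k ∈ Finset.range (⌊1/ε⌋₊ + 1), ((((k:ℝ)+2)^p - (k:ℝ)^p) * ε^p)^n
      ≤ 2^(p*(n:ℝ)) * ε^(p*(n:ℝ))
        + (2*p)^n * ε^(p*(n:ℝ)) * ∑ j ∈ Finset.range ⌊1/ε⌋₊, ((j:ℝ)+1)^((p-1)*(n:ℝ)) := by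
  rw [Finset.sum_range_succ']
  have hpow : ∀ (x a : ℝ), 0 ≤ x → (x^a)^n = x^(a*(n:ℝ)) := by
    intro x a hx
    rw [← Real.rpow_natCast (x^a) n, ← Real.rpow_mul hx]
  have h0 : ((((0:ℕ):ℝ)+2)^p - ((0:ℕ):ℝ)^p) * ε^p = 2^p * ε^p := by
    norm_num [Real.zero_rpow hp.ne']
  have h0' : (((((0:ℕ):ℝ)+2)^p - ((0:ℕ):ℝ)^p) * ε^p)^n = 2^(p*(n:ℝ)) * ε^(p*(n:ℝ)) := by
    rw [h0, mul_pow, hpow 2 p (by norm_num), hpow ε p hε0.le]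
  rw [h0', add_comm]
  gcongr _ + ?_
  rw [Finset.mul_sum]
  apply Finset.sum_le_sum
  intro j _
  have hcast : (((j+1:ℕ)):ℝ) = (j:ℝ) + 1 := by push_cast; ring
  set x : ℝ := (j:ℝ) + 1 with hx
  have hx1 : (1:ℝ) ≤ x := by simp only [hx, le_add_iff_nonneg_left]; positivity
  have hx0 : (0:ℝ) ≤ x := by linarith
  rw [hcast]
  have hak := ak_le p hp hp1 x hx1
  have hbase_nn : 0 ≤ (x+2)^p - x^p := by
    have : x^p ≤ (x+2)^p := Real.rpow_le_rpow hx0 (by linarith) hp.le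
    linarith
  have hεp : (0:ℝ) ≤ ε^p := Real.rpow_nonneg hε0.le _
  have hstep : (((x+2)^p - x^p) * ε^p)^n ≤ ((2*p*x^(p-1)) * ε^p)^n := by
    apply pow_le_pow_left₀ (mul_nonneg hbase_nn hεp)
    exact mul_le_mul_of_nonneg_right hak hεp
  refine hstep.trans (le_of_eq ?_)
  rw [mul_pow, mul_pow, hpow ε p hε0.le, hpow x (p-1) hx0]
  ring

theorem range_small_ball_estimate
    {Ω : Type*} [MeasurableSpace Ω] (μ : Measure Ω) [IsProbabilityMeasure μ]
    (p : ℝ) (hp : 0 < p) (hp1 : p < 1) (n : ℕ) (hn : 2 ≤ n)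
    (hne : (Finset.univ : Finset (Fin n)).Nonempty)
    (X : Fin n → Ω → ℝ) (hXm : ∀ i, Measurable (X i))
    (hindep : iIndepFun X μ)
    (hlaw : ∀ i, Measure.map (X i) μ =
      (volume.restrict (Set.Ioc (0:ℝ) 1)).withDensity
        (fun x => ENNReal.ofReal (p * x ^ (p - 1))))
    (R : Ω → ℝ) (hR : ∀ ω, R ω = Finset.univ.sup' hne (fun i => X i ω)
      - Finset.univ.inf' hne (fun i => X i ω)) :
    ((n : ℝ) * p < (n : ℝ) - 1 →
      ∀ ε ∈ Set.Ioo (0:ℝ) (1/2),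
        (∫ t in Set.Icc (1:ℝ) (1/ε - 1), (1 + t) ^ ((p - 1) * ((n:ℝ) - 1)) * t ^ (p - 1))
          ≤ 1 / ((1 - p) * n - 1)) ∧
    ((n : ℝ) * p ≠ (n : ℝ) - 1 →
      (fun ε : ℝ => (μ {ω | R ω ≤ ε}).toReal) =O[nhdsWithin 0 (Set.Ioi 0)]
        (fun ε : ℝ => ε ^ (min ((n:ℝ) * p) ((n:ℝ) - 1)))) ∧
    ((n : ℝ) * p = (n : ℝ) - 1 →
      (fun ε : ℝ => (μ {ω | R ω ≤ ε}).toReal) =O[nhdsWithin 0 (Set.Ioi 0)]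
        (fun ε : ℝ => ε ^ ((n:ℝ) - 1) * Real.log (1/ε))) := by
  have hn2 : (2:ℝ) ≤ (n:ℝ) := by exact_mod_cast hn
  have master : ∀ ε ∈ Set.Ioo (0:ℝ) (1/2), (μ {ω | R ω ≤ ε}).toReal ≤
      2^(p*(n:ℝ)) * ε^(p*(n:ℝ))
        + (2*p)^n * ε^(p*(n:ℝ)) * ∑ j ∈ Finset.range ⌊1/ε⌋₊, ((j:ℝ)+1)^((p-1)*(n:ℝ)) :=
    fun ε hε => le_trans
      (key_bound μ p hp hp1 n hn hne X hXm hindep hlaw R hR ε hε.1 hε.2)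
      (Tbound p hp hp1 n ε hε.1)
  refine ⟨fun h ε hε => part1 p hp hp1 n hn h ε hε, ?_, ?_⟩
  · -- np ≠ n - 1
    intro hneq
    rcases hneq.lt_or_gt with hlt | hgt
    · -- np < n - 1 : exponent min = n*p
      have hq : (p-1)*(n:ℝ) < -1 := by nlinarith
      set CA := ∑' j : ℕ, ((j:ℝ) + 1) ^ ((p-1)*(n:ℝ)) with hCA
      rw [Asymptotics.isBigO_iff]
      refine ⟨2^(p*(n:ℝ)) + (2*p)^n * CA, ?_⟩
      filter_upwards [Ioo_mem_nhdsGT (by norm_num : (0:ℝ) < 1/2)] with ε hε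
      have hε0 := hε.1
      have hS := sumA ((p-1)*(n:ℝ)) hq ⌊1/ε⌋₊
      have hb := master ε hε
      have hεpn : (0:ℝ) ≤ ε^(p*(n:ℝ)) := Real.rpow_nonneg hε0.le _
      have h2p : (0:ℝ) ≤ (2*p)^n := by positivity
      have hmono : (2*p)^n * ε^(p*(n:ℝ)) * (∑ j ∈ Finset.range ⌊1/ε⌋₊,
          ((j:ℝ)+1)^((p-1)*(n:ℝ))) ≤ (2*p)^n * ε^(p*(n:ℝ)) * CA := by
        apply mul_le_mul_of_nonneg_left hS (by positivity)
      rw [Real.norm_eq_abs, Real.norm_eq_abs, abs_of_nonneg ENNReal.toReal_nonneg,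
        abs_of_nonneg (Real.rpow_nonneg hε0.le _), min_eq_left hlt.le]
      have hexp : ε^((n:ℝ)*p) = ε^(p*(n:ℝ)) := by rw [mul_comm]
      rw [hexp]
      nlinarith
    · -- n-1 < np : exponent min = n-1
      have hq1 : 0 < (p-1)*(n:ℝ) + 1 := by nlinarith
      have hq0 : (p-1)*(n:ℝ) < 0 := by nlinarith
      rw [Asymptotics.isBigO_iff]
      refine ⟨2^(p*(n:ℝ)) + (2*p)^n / ((p-1)*(n:ℝ)+1), ?_⟩
      filter_upwards [Ioo_mem_nhdsGT (by norm_num : (0:ℝ) < 1/2)] with ε hε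
      have hb := master ε hε
      obtain ⟨hε0, hε2⟩ := hε
      have hS := sumB ((p-1)*(n:ℝ)) (by nlinarith) hq0 ⌊1/ε⌋₊
      have hKle : (⌊1/ε⌋₊ : ℝ) ≤ 1/ε := Nat.floor_le (by positivity)
      have hKr : ((⌊1/ε⌋₊:ℝ))^((p-1)*(n:ℝ)+1) ≤ (1/ε)^((p-1)*(n:ℝ)+1) :=
        Real.rpow_le_rpow (Nat.cast_nonneg _) hKle hq1.le
      have hinv : (1/ε)^((p-1)*(n:ℝ)+1) = (ε^((p-1)*(n:ℝ)+1))⁻¹ := by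
        rw [one_div, Real.inv_rpow hε0.le]
      have hcomb : ε^(p*(n:ℝ)) * (ε^((p-1)*(n:ℝ)+1))⁻¹ = ε^((n:ℝ)-1) := by
        rw [← Real.rpow_neg hε0.le, ← Real.rpow_add hε0]
        congr 1
        ring
      have hfirst : 2^(p*(n:ℝ)) * ε^(p*(n:ℝ)) ≤ 2^(p*(n:ℝ)) * ε^((n:ℝ)-1) := by
        apply mul_le_mul_of_nonneg_left _ (by positivity)
        exact Real.rpow_le_rpow_of_exponent_ge hε0 (by linarith) (by nlinarith)
      have hsecond : (2*p)^n * ε^(p*(n:ℝ)) * (∑ j ∈ Finset.range ⌊1/ε⌋₊,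
          ((j:ℝ)+1)^((p-1)*(n:ℝ)))
          ≤ (2*p)^n / ((p-1)*(n:ℝ)+1) * ε^((n:ℝ)-1) := by
        have h1 : (∑ j ∈ Finset.range ⌊1/ε⌋₊, ((j:ℝ)+1)^((p-1)*(n:ℝ)))
            ≤ (ε^((p-1)*(n:ℝ)+1))⁻¹ / ((p-1)*(n:ℝ)+1) := by
          refine hS.trans ?_
          rw [← hinv]
          gcongr
        have h2 : (0:ℝ) ≤ (2*p)^n * ε^(p*(n:ℝ)) := by positivity
        calc (2*p)^n * ε^(p*(n:ℝ)) * (∑ j ∈ Finset.range ⌊1/ε⌋₊,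
              ((j:ℝ)+1)^((p-1)*(n:ℝ)))
            ≤ (2*p)^n * ε^(p*(n:ℝ)) * ((ε^((p-1)*(n:ℝ)+1))⁻¹ / ((p-1)*(n:ℝ)+1)) :=
              mul_le_mul_of_nonneg_left h1 h2
          _ = (2*p)^n / ((p-1)*(n:ℝ)+1) * (ε^(p*(n:ℝ)) * (ε^((p-1)*(n:ℝ)+1))⁻¹) := by
              ring
          _ = (2*p)^n / ((p-1)*(n:ℝ)+1) * ε^((n:ℝ)-1) := by rw [hcomb]
      rw [Real.norm_eq_abs, Real.norm_eq_abs, abs_of_nonneg ENNReal.toReal_nonneg,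
        abs_of_nonneg (Real.rpow_nonneg hε0.le _), min_eq_right hgt.le]
      calc (μ {ω | R ω ≤ ε}).toReal
          ≤ 2^(p*(n:ℝ)) * ε^(p*(n:ℝ)) + (2*p)^n * ε^(p*(n:ℝ))
            * ∑ j ∈ Finset.range ⌊1/ε⌋₊, ((j:ℝ)+1)^((p-1)*(n:ℝ)) := hb
        _ ≤ 2^(p*(n:ℝ)) * ε^((n:ℝ)-1) + (2*p)^n / ((p-1)*(n:ℝ)+1) * ε^((n:ℝ)-1) := by
            linarith
        _ = (2^(p*(n:ℝ)) + (2*p)^n / ((p-1)*(n:ℝ)+1)) * ε^((n:ℝ)-1) := by ring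
  · -- np = n - 1
    intro heq
    have hqeq : (p-1)*(n:ℝ) = -1 := by nlinarith
    have hlog2 : (0:ℝ) < Real.log 2 := Real.log_pos (by norm_num)
    rw [Asymptotics.isBigO_iff]
    refine ⟨2^(p*(n:ℝ)) / Real.log 2 + (2*p)^n * (1/Real.log 2 + 1), ?_⟩
    filter_upwards [Ioo_mem_nhdsGT (by norm_num : (0:ℝ) < 1/2)] with ε hε
    have hb := master ε hε
    obtain ⟨hε0, hε2⟩ := hε
    have h2inv : (2:ℝ) ≤ 1/ε := by
      rw [le_div_iff₀ hε0]; linarith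
    have hK1 : 1 ≤ ⌊1/ε⌋₊ := Nat.le_floor (by push_cast; linarith)
    have hKle : (⌊1/ε⌋₊ : ℝ) ≤ 1/ε := Nat.floor_le (by positivity)
    have hKpos : (0:ℝ) < (⌊1/ε⌋₊ : ℝ) := by exact_mod_cast hK1
    set L := Real.log (1/ε) with hL
    have hL2 : Real.log 2 ≤ L := Real.log_le_log (by norm_num) h2inv
    have hLpos : 0 < L := lt_of_lt_of_le hlog2 hL2
    have hS : (∑ j ∈ Finset.range ⌊1/ε⌋₊, ((j:ℝ)+1)^((p-1)*(n:ℝ)))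
        ≤ 1 + L := by
      rw [hqeq]
      refine (sumC ⌊1/ε⌋₊ hK1).trans ?_
      have := Real.log_le_log hKpos hKle
      linarith
    have h1L : 1 + L ≤ (1/Real.log 2 + 1) * L := by
      have h1 : 1 ≤ L / Real.log 2 := (one_le_div hlog2).mpr hL2
      have : L / Real.log 2 = (1/Real.log 2) * L := by ring
      nlinarith
    have hexp : ε^(p*(n:ℝ)) = ε^((n:ℝ)-1) := by
      congr 1
      nlinarith
    have hεn : (0:ℝ) ≤ ε^((n:ℝ)-1) := Real.rpow_nonneg hε0.le _
    have hfirst : 2^(p*(n:ℝ)) * ε^((n:ℝ)-1)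
        ≤ 2^(p*(n:ℝ)) / Real.log 2 * (ε^((n:ℝ)-1) * L) := by
      have h1 : 1 ≤ L / Real.log 2 := (one_le_div hlog2).mpr hL2
      have h2 : (0:ℝ) < 2^(p*(n:ℝ)) := Real.rpow_pos_of_pos (by norm_num) _
      calc 2^(p*(n:ℝ)) * ε^((n:ℝ)-1) = 2^(p*(n:ℝ)) * ε^((n:ℝ)-1) * 1 := by ring
        _ ≤ 2^(p*(n:ℝ)) * ε^((n:ℝ)-1) * (L / Real.log 2) := by
            apply mul_le_mul_of_nonneg_left h1 (by positivity)
        _ = 2^(p*(n:ℝ)) / Real.log 2 * (ε^((n:ℝ)-1) * L) := by ring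
    have hsecond : (2*p)^n * ε^((n:ℝ)-1) * (∑ j ∈ Finset.range ⌊1/ε⌋₊,
        ((j:ℝ)+1)^((p-1)*(n:ℝ)))
        ≤ (2*p)^n * (1/Real.log 2 + 1) * (ε^((n:ℝ)-1) * L) := by
      calc (2*p)^n * ε^((n:ℝ)-1) * (∑ j ∈ Finset.range ⌊1/ε⌋₊,
            ((j:ℝ)+1)^((p-1)*(n:ℝ)))
          ≤ (2*p)^n * ε^((n:ℝ)-1) * ((1/Real.log 2 + 1) * L) :=
            mul_le_mul_of_nonneg_left (hS.trans h1L) (by positivity)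
        _ = (2*p)^n * (1/Real.log 2 + 1) * (ε^((n:ℝ)-1) * L) := by ring
    rw [Real.norm_eq_abs, Real.norm_eq_abs, abs_of_nonneg ENNReal.toReal_nonneg,
      abs_of_nonneg (mul_nonneg hεn hLpos.le)]
    rw [hexp] at hb
    calc (μ {ω | R ω ≤ ε}).toReal
        ≤ 2^(p*(n:ℝ)) * ε^((n:ℝ)-1) + (2*p)^n * ε^((n:ℝ)-1)
          * ∑ j ∈ Finset.range ⌊1/ε⌋₊, ((j:ℝ)+1)^((p-1)*(n:ℝ)) := hb
      _ ≤ 2^(p*(n:ℝ)) / Real.log 2 * (ε^((n:ℝ)-1) * L)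
          + (2*p)^n * (1/Real.log 2 + 1) * (ε^((n:ℝ)-1) * L) := by linarith
      _ = (2^(p*(n:ℝ)) / Real.log 2 + (2*p)^n * (1/Real.log 2 + 1))
          * (ε^((n:ℝ)-1) * L) := by ring
end
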